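/- For a permutation π of {1, ..., n} with 1 ≤_T π ≤_T c where c is the n-cycle (1 2 ... n), the partition of {1,...,n} given by the cycles of π (including fixed points as singleton blocks) is a classical noncrossing partition, and the map π ↦ {cycles of π} is an order isomorphism between the poset of noncrossing partitions of the symmetric group S_n (under absolute order) and the poset of classical noncrossing partitions of {1,...,n} ordered by refinement. -/

import Mathlib

/-- The absolute length of a permutation: the minimal number of transpositions
whose product is the permutation. -/
noncomputable def absLength {α : Type*} [DecidableEq α] [Fintype α] (π : Equiv.Perm α) : ℕ :=
  sInf {k | ∃ l : List (Equiv.Perm α), l.length = k ∧ (∀ t ∈ l, t.IsSwap) ∧ l.prod = π}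

/-- The absolute order on the symmetric group. -/
def absLe {α : Type*} [DecidableEq α] [Fintype α] (u v : Equiv.Perm α) : Prop :=
  absLength v = absLength u + absLength (u⁻¹ * v)

/-- The Coxeter element `c = s₁ s₂ ⋯ sₙ = (1 2 ⋯ n+1)` of `S_{n+1}`. -/
def coxeterA (n : ℕ) : Equiv.Perm (Fin (n + 1)) :=
  (List.ofFn fun i : Fin n => Equiv.swap i.castSucc i.succ).prod

/-- A classical noncrossing partition of `{1, …, m}` (modelled by `Fin m`). -/
def IsNCPartition {m : ℕ} (P : Set (Finset (Fin m))) : Prop :=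
  (∀ B ∈ P, B.Nonempty) ∧ (∀ x : Fin m, ∃! B, B ∈ P ∧ x ∈ B) ∧
    ¬ ∃ (a b c d : Fin m) (B C : Finset (Fin m)), B ∈ P ∧ C ∈ P ∧ B ≠ C ∧
      a < b ∧ b < c ∧ c < d ∧ a ∈ B ∧ c ∈ B ∧ b ∈ C ∧ d ∈ C

/-- The partition of `{1, …, m}` given by the cycles of a permutation `π`
(fixed points giving singleton blocks). -/
noncomputable def cycleBlocks {m : ℕ} (π : Equiv.Perm (Fin m)) : Set (Finset (Fin m)) :=
  {B | ∃ a : Fin m,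
    B = @Finset.filter _ (fun b => π.SameCycle a b) (Classical.decPred _) Finset.univ}

/-- Refinement order on partitions given by sets of blocks. -/
def Refines {m : ℕ} (P Q : Set (Finset (Fin m))) : Prop :=
  ∀ B ∈ P, ∃ C ∈ Q, B ⊆ C

open Equiv Equiv.Perm Finset

variable {m : ℕ}

/-- The block (cycle) of `a` under `π`. -/
noncomputable def blk (π : Equiv.Perm (Fin m)) (a : Fin m) : Finset (Fin m) :=
  @Finset.filter _ (fun b => π.SameCycle a b) (Classical.decPred _) Finset.univ

lemma mem_blk {π : Equiv.Perm (Fin m)} {a b : Fin m} : b ∈ blk π a ↔ π.SameCycle a b := by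
  simp [blk]

lemma self_mem_blk (π : Equiv.Perm (Fin m)) (a : Fin m) : a ∈ blk π a :=
  mem_blk.2 (SameCycle.refl _ _)

lemma blk_nonempty {π : Equiv.Perm (Fin m)} (a : Fin m) : (blk π a).Nonempty :=
  ⟨a, self_mem_blk π a⟩

lemma blk_congr {π : Equiv.Perm (Fin m)} {a b : Fin m} (h : b ∈ blk π a) :
    blk π b = blk π a := by
  ext c; simp only [mem_blk] at *
  exact ⟨fun hc => h.trans hc, fun hc => h.symm.trans hc⟩

lemma blk_eq_iff {π : Equiv.Perm (Fin m)} {a b : Fin m} :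
    blk π a = blk π b ↔ π.SameCycle a b := by
  constructor
  · intro h; have := self_mem_blk π b; rw [← h] at this; exact mem_blk.1 this
  · intro h; exact (blk_congr (mem_blk.2 h)).symm

lemma blk_disjoint {π : Equiv.Perm (Fin m)} {a b : Fin m} (h : blk π a ≠ blk π b) :
    ∀ c, c ∈ blk π a → c ∉ blk π b := by
  intro c hc hcb
  exact h (((blk_congr hc).symm.trans (blk_congr hcb)) ▸ rfl)

lemma cycleBlocks_eq (π : Equiv.Perm (Fin m)) :
    cycleBlocks π = {B | ∃ a, B = blk π a} := rfl

lemma blk_mem_cycleBlocks (π : Equiv.Perm (Fin m)) (a : Fin m) :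
    blk π a ∈ cycleBlocks π := ⟨a, rfl⟩

lemma mem_cycleBlocks_iff {π : Equiv.Perm (Fin m)} {B : Finset (Fin m)} :
    B ∈ cycleBlocks π ↔ ∃ a, B = blk π a := Iff.rfl

lemma eq_blk_of_mem {π : Equiv.Perm (Fin m)} {B : Finset (Fin m)} (hB : B ∈ cycleBlocks π)
    {x : Fin m} (hx : x ∈ B) : B = blk π x := by
  obtain ⟨a, rfl⟩ := hB
  exact (blk_congr hx).symm

/-- The number of blocks of `π`. -/
noncomputable def nu (π : Equiv.Perm (Fin m)) : ℕ := (Finset.univ.image (blk π)).card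

lemma nu_le (π : Equiv.Perm (Fin m)) : nu π ≤ m := by
  simpa [nu] using (Finset.card_image_le (s := (univ : Finset (Fin m))) (f := blk π))

lemma nu_one : nu (1 : Equiv.Perm (Fin m)) = m := by
  have h : ∀ a : Fin m, blk (1 : Equiv.Perm (Fin m)) a = {a} := by
    intro a; ext b
    simp only [mem_blk, Finset.mem_singleton]
    constructor
    · rintro ⟨i, hi⟩; simpa using hi.symm
    · rintro rfl; exact SameCycle.refl _ _
  have : Function.Injective (blk (1 : Equiv.Perm (Fin m))) := by
    intro a b hab; rw [h a, h b] at hab; simpa using hab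
  rw [nu, Finset.card_image_of_injective _ this, card_univ, Fintype.card_fin]

lemma eq_one_of_nu_eq (π : Equiv.Perm (Fin m)) (h : nu π = m) : π = 1 := by
  by_contra hne
  obtain ⟨x, hx⟩ : ∃ x, π x ≠ x := by
    by_contra h'; push_neg at h'; exact hne (Equiv.ext h')
  have hinj : Set.InjOn (blk π) (univ : Finset (Fin m)) := by
    apply Finset.card_image_iff.mp
    unfold nu at h
    rw [h, card_univ, Fintype.card_fin]
  have h1 : blk π x = blk π (π x) := blk_eq_iff.2 ⟨1, by simp⟩
  exact hx (hinj (by simp) (by simp) h1.symm)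

/-- next element of `S` above `x`, wrapping to `min S`. -/
def nxt (S : Finset (Fin m)) (x : Fin m) : Fin m :=
  if h : (S.filter (fun y => x < y)).Nonempty then (S.filter (fun y => x < y)).min' h
  else if h2 : S.Nonempty then S.min' h2 else x

lemma nxt_mem {S : Finset (Fin m)} (hS : S.Nonempty) (x : Fin m) : nxt S x ∈ S := by
  unfold nxt
  rcases em ((S.filter (fun y => x < y)).Nonempty) with h | h
  · rw [dif_pos h]; exact (Finset.mem_filter.1 ((S.filter _).min'_mem h)).1
  · rw [dif_neg h, dif_pos hS]; exact S.min'_mem hS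

lemma nxt_eq_of_lt {S : Finset (Fin m)} {x z : Fin m} (hz : z ∈ S) (hxz : x < z)
    (hmin : ∀ y ∈ S, x < y → z ≤ y) : nxt S x = z := by
  have hne : (S.filter (fun y => x < y)).Nonempty := ⟨z, Finset.mem_filter.2 ⟨hz, hxz⟩⟩
  unfold nxt
  rw [dif_pos hne]
  apply le_antisymm
  · exact Finset.min'_le _ _ (Finset.mem_filter.2 ⟨hz, hxz⟩)
  · apply Finset.le_min'
    intro y hy
    obtain ⟨hyS, hxy⟩ := Finset.mem_filter.1 hy
    exact hmin y hyS hxy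

lemma nxt_eq_of_max {S : Finset (Fin m)} {x : Fin m} (hS : S.Nonempty)
    (hmax : ∀ y ∈ S, y ≤ x) : nxt S x = S.min' hS := by
  have hne : ¬ (S.filter (fun y => x < y)).Nonempty := by
    rintro ⟨y, hy⟩
    obtain ⟨hyS, hxy⟩ := Finset.mem_filter.1 hy
    exact absurd (hmax y hyS) (not_le.2 hxy)
  unfold nxt
  rw [dif_neg hne, dif_pos hS]

lemma lt_nxt_of_lt {S : Finset (Fin m)} {x z : Fin m} (hz : z ∈ S) (hxz : x < z) :
    x < nxt S x ∧ nxt S x ≤ z ∧ nxt S x ∈ S := by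
  have hne : (S.filter (fun y => x < y)).Nonempty := ⟨z, Finset.mem_filter.2 ⟨hz, hxz⟩⟩
  unfold nxt
  rw [dif_pos hne]
  refine ⟨?_, ?_, ?_⟩
  · exact (Finset.mem_filter.1 ((S.filter _).min'_mem hne)).2
  · exact Finset.min'_le _ _ (Finset.mem_filter.2 ⟨hz, hxz⟩)
  · exact (Finset.mem_filter.1 ((S.filter _).min'_mem hne)).1

section P2
variable {m : ℕ}

lemma pow_mem_of_mapsTo {τ : Equiv.Perm (Fin m)} {S : Finset (Fin m)}
    (hS : ∀ y ∈ S, τ y ∈ S) {x : Fin m} (hx : x ∈ S) : ∀ i : ℕ, (τ ^ i) x ∈ S := by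
  intro i
  induction i with
  | zero => simpa using hx
  | succ i ih => rw [pow_succ', Equiv.Perm.mul_apply]; exact hS _ ih

lemma sameCycle_of_mem_nat {τ : Equiv.Perm (Fin m)} {x y : Fin m}
    (h : ∃ i : ℕ, (τ ^ i) x = y) : τ.SameCycle x y := by
  obtain ⟨i, hi⟩ := h
  exact ⟨(i : ℤ), by simpa using hi⟩

/-- ORBIT: if `τ` moves every point to the next point of its prescribed block, then
the cycles of `τ` are exactly the prescribed blocks. -/
lemma blk_eq_of_aligned_blocks {τ : Equiv.Perm (Fin m)} {B : Fin m → Finset (Fin m)}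
    (hmem : ∀ x, x ∈ B x) (hcongr : ∀ x y, y ∈ B x → B y = B x)
    (hal : ∀ x, τ x = nxt (B x) x) : ∀ x, blk τ x = B x := by
  have hinv : ∀ x y, y ∈ B x → τ y ∈ B x := by
    intro x y hy
    rw [hal y, hcongr x y hy]
    exact nxt_mem ⟨y, (hcongr x y hy) ▸ hmem y⟩ y
  have hsub : ∀ x, blk τ x ⊆ B x := by
    intro x y hy
    obtain ⟨i, _, hi⟩ := (mem_blk.1 hy).exists_pow_eq'
    exact hi ▸ pow_mem_of_mapsTo (hinv x) (hmem x) i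
  intro x
  apply Finset.Subset.antisymm (hsub x)
  -- O := blk τ x
  set O := blk τ x with hOdef
  have hxO : x ∈ O := self_mem_blk τ x
  have hONe : O.Nonempty := ⟨x, hxO⟩
  have hOcl : ∀ y ∈ O, τ y ∈ O := by
    intro y hy
    exact mem_blk.2 ((mem_blk.1 hy).trans ⟨1, by simp⟩)
  have hBz : ∀ z ∈ O, B z = B x := fun z hz => hcongr x z (hsub x hz)
  -- min of B x is in O
  have hminO : (B x).min' ⟨x, hmem x⟩ ∈ O := by
    set z := O.max' hONe with hzdef
    have hzO : z ∈ O := O.max'_mem hONe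
    have hzB : z ∈ B x := hsub x hzO
    have hmax : ∀ s ∈ B x, s ≤ z := by
      by_contra hc
      push_neg at hc
      obtain ⟨s, hs, hzs⟩ := hc
      have h1 := lt_nxt_of_lt (S := B x) hs hzs
      have : τ z ∈ O := hOcl z hzO
      rw [hal z, hBz z hzO] at this
      exact absurd (Finset.le_max' O _ this) (not_le.2 (hzdef ▸ h1.1))
    have : τ z = (B x).min' ⟨x, hmem x⟩ := by
      rw [hal z, hBz z hzO]
      exact nxt_eq_of_max ⟨x, hmem x⟩ hmax
    exact this ▸ hOcl z hzO
  intro y hyB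
  by_contra hyO
  have hWne : (O.filter (fun w => w < y)).Nonempty := by
    refine ⟨(B x).min' ⟨x, hmem x⟩, Finset.mem_filter.2 ⟨hminO, ?_⟩⟩
    rcases lt_or_eq_of_le ((B x).min'_le y hyB) with h | h
    · exact h
    · exact absurd (h ▸ hminO) hyO
  set z := (O.filter (fun w => w < y)).max' hWne with hzdef
  have hzW := (O.filter (fun w => w < y)).max'_mem hWne
  obtain ⟨hzO, hzy⟩ := Finset.mem_filter.1 hzW
  have h1 := lt_nxt_of_lt (S := B x) hyB hzy
  have hτz : τ z ∈ O := hOcl z hzO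
  rw [hal z, hBz z hzO] at hτz
  rcases lt_or_eq_of_le h1.2.1 with h | h
  · have : nxt (B x) z ∈ O.filter (fun w => w < y) := Finset.mem_filter.2 ⟨hτz, h⟩
    exact absurd (Finset.le_max' _ _ this) (not_le.2 (hzdef ▸ h1.1))
  · exact hyO (h ▸ hτz)

/-- Alignment: every point maps to the next point of its own cycle. -/
def Aligned {m : ℕ} (π : Equiv.Perm (Fin m)) : Prop := ∀ x, π x = nxt (blk π x) x

lemma aligned_unique {π σ : Equiv.Perm (Fin m)} (hπ : Aligned π) (hσ : Aligned σ)
    (h : ∀ x, blk π x = blk σ x) : π = σ := by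
  apply Equiv.ext
  intro x
  rw [hπ x, hσ x, h x]

lemma blk_eq_of_cycleBlocks_eq {π σ : Equiv.Perm (Fin m)}
    (h : cycleBlocks π = cycleBlocks σ) : ∀ x, blk π x = blk σ x := by
  intro x
  have h1 : blk π x ∈ cycleBlocks σ := h ▸ blk_mem_cycleBlocks π x
  exact eq_blk_of_mem h1 (self_mem_blk π x)

end P2
section P3
variable {m : ℕ}

open Equiv Equiv.Perm Finset

/-- Merging lemma: multiplying by a transposition joining two distinct cycles merges them. -/
lemma blk_swap_mul {π : Equiv.Perm (Fin m)} {u v : Fin m} (huv : u ≠ v)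
    (hnc : ¬ π.SameCycle u v) (x : Fin m) :
    blk (Equiv.swap u v * π) x =
      if x ∈ blk π u ∪ blk π v then blk π u ∪ blk π v else blk π x := by
  set σ := Equiv.swap u v * π with hσ
  have hvu : v ∉ blk π u := fun h => hnc (mem_blk.1 h)
  have huvb : u ∉ blk π v := fun h => hnc ((mem_blk.1 h).symm)
  have hval : ∀ y : Fin m, σ y = Equiv.swap u v (π y) := fun y => rfl
  -- the union is σ-invariant
  have hUinv : ∀ y ∈ blk π u ∪ blk π v, σ y ∈ blk π u ∪ blk π v := by
    intro y hy
    have hπy : π y ∈ blk π u ∪ blk π v := by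
      rcases Finset.mem_union.1 hy with h | h
      · exact Finset.mem_union_left _ (mem_blk.2 ((mem_blk.1 h).trans ⟨1, rfl⟩))
      · exact Finset.mem_union_right _ (mem_blk.2 ((mem_blk.1 h).trans ⟨1, rfl⟩))
    rw [hval]
    rcases eq_or_ne (π y) u with h | h
    · rw [h, Equiv.swap_apply_left]
      exact Finset.mem_union_right _ (self_mem_blk π v)
    rcases eq_or_ne (π y) v with h2 | h2
    · rw [h2, Equiv.swap_apply_right]
      exact Finset.mem_union_left _ (self_mem_blk π u)
    · rw [Equiv.swap_apply_of_ne_of_ne h h2]; exact hπy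
  -- complement blocks are σ-invariant with σ = π there
  have hCinv : ∀ w, w ∉ blk π u ∪ blk π v → ∀ y ∈ blk π w, σ y = π y ∧ π y ∈ blk π w := by
    intro w hw y hy
    have hπy : π y ∈ blk π w := mem_blk.2 ((mem_blk.1 hy).trans ⟨1, rfl⟩)
    have h1 : π y ≠ u := by
      intro h
      apply hw
      have : w ∈ blk π u := mem_blk.2 ((mem_blk.1 (h ▸ hπy)).symm)
      exact Finset.mem_union_left _ this
    have h2 : π y ≠ v := by
      intro h
      apply hw
      have : w ∈ blk π v := mem_blk.2 ((mem_blk.1 (h ▸ hπy)).symm)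
      exact Finset.mem_union_right _ this
    exact ⟨by rw [hval, Equiv.swap_apply_of_ne_of_ne h1 h2], hπy⟩
  -- Bu ⊆ blk σ u
  have hBu : ∀ y ∈ blk π u, y ∈ blk σ u := by
    intro y hy
    obtain ⟨i, hlt, hi⟩ := (mem_blk.1 hy).exists_pow_eq'
    subst hi
    clear hy hlt
    induction i with
    | zero => simpa using self_mem_blk σ u
    | succ i ih =>
      rw [pow_succ', Equiv.Perm.mul_apply]
      rcases eq_or_ne (π ((π ^ i) u)) v with h | h
      · exact absurd (mem_blk.2 (sameCycle_of_mem_nat ⟨i + 1, by rw [pow_succ', Equiv.Perm.mul_apply, h]⟩)) hvu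
      rcases eq_or_ne (π ((π ^ i) u)) u with h2 | h2
      · rw [h2]; exact self_mem_blk σ u
      · have : σ ((π ^ i) u) = π ((π ^ i) u) := by
          rw [hval, Equiv.swap_apply_of_ne_of_ne h2 h]
        rw [← this]
        exact mem_blk.2 ((mem_blk.1 ih).trans ⟨1, rfl⟩)
  -- v ∈ blk σ u
  have hvO : v ∈ blk σ u := by
    have h1 : π⁻¹ u ∈ blk π u := mem_blk.2 ⟨-1, by simp⟩
    have h2 : σ (π⁻¹ u) = v := by
      rw [hval]; simp [Equiv.swap_apply_left]
    have := mem_blk.1 (hBu _ h1)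
    exact mem_blk.2 (this.trans (h2 ▸ ⟨1, rfl⟩))
  -- Bv ⊆ blk σ u
  have hBv : ∀ y ∈ blk π v, y ∈ blk σ u := by
    intro y hy
    obtain ⟨i, hlt, hi⟩ := (mem_blk.1 hy).exists_pow_eq'
    subst hi
    clear hy hlt
    induction i with
    | zero => simpa using hvO
    | succ i ih =>
      rw [pow_succ', Equiv.Perm.mul_apply]
      rcases eq_or_ne (π ((π ^ i) v)) u with h | h
      · exact absurd (mem_blk.2 (sameCycle_of_mem_nat ⟨i + 1, by rw [pow_succ', Equiv.Perm.mul_apply, h]⟩)) huvb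
      rcases eq_or_ne (π ((π ^ i) v)) v with h2 | h2
      · rw [h2]; exact hvO
      · have : σ ((π ^ i) v) = π ((π ^ i) v) := by
          rw [hval, Equiv.swap_apply_of_ne_of_ne h h2]
        rw [← this]
        exact mem_blk.2 ((mem_blk.1 ih).trans ⟨1, rfl⟩)
  -- blk σ u = Bu ∪ Bv
  have hkey : blk σ u = blk π u ∪ blk π v := by
    apply Finset.Subset.antisymm
    · intro y hy
      obtain ⟨i, _, hi⟩ := (mem_blk.1 hy).exists_pow_eq'
      exact hi ▸ pow_mem_of_mapsTo hUinv (Finset.mem_union_left _ (self_mem_blk π u)) i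
    · intro y hy
      rcases Finset.mem_union.1 hy with h | h
      · exact hBu y h
      · exact hBv y h
  rcases em (x ∈ blk π u ∪ blk π v) with hx | hx
  · rw [if_pos hx]
    rw [← hkey]
    apply blk_congr
    rw [hkey]; exact hx
  · rw [if_neg hx]
    apply Finset.Subset.antisymm
    · intro y hy
      obtain ⟨i, hlt, hi⟩ := (mem_blk.1 hy).exists_pow_eq'
      subst hi
      clear hy hlt
      induction i with
      | zero => simpa using self_mem_blk π x
      | succ i ih =>
        rw [pow_succ', Equiv.Perm.mul_apply, (hCinv x hx _ ih).1]
        exact (hCinv x hx _ ih).2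
    · intro y hy
      obtain ⟨i, _, hi⟩ := (mem_blk.1 hy).exists_pow_eq'
      subst hi
      have : ∀ j : ℕ, (π ^ j) x = (σ ^ j) x ∧ (π ^ j) x ∈ blk π x := by
        intro j
        induction j with
        | zero => simpa using self_mem_blk π x
        | succ j ih =>
          constructor
          · rw [pow_succ', Equiv.Perm.mul_apply, pow_succ', Equiv.Perm.mul_apply, ← ih.1,
              (hCinv x hx _ ih.2).1]
          · rw [pow_succ', Equiv.Perm.mul_apply]
            exact (hCinv x hx _ ih.2).2
      exact mem_blk.2 (sameCycle_of_mem_nat ⟨i, (this i).1.symm⟩)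

/-- Splitting: a transposition inside one cycle separates its endpoints. -/
lemma not_sameCycle_swap_mul {π : Equiv.Perm (Fin m)} {u v : Fin m} (huv : u ≠ v)
    (hc : π.SameCycle u v) : ¬ (Equiv.swap u v * π).SameCycle u v := by
  set σ := Equiv.swap u v * π with hσ
  have hval : ∀ y : Fin m, σ y = Equiv.swap u v (π y) := fun y => rfl
  -- minimal positive j with π^j u = v
  obtain ⟨j0, _, hj0⟩ := hc.exists_pow_eq'
  have hj0pos : j0 ≠ 0 := by rintro rfl; simp at hj0; exact huv hj0
  have hex : ∃ j, 0 < j ∧ (π ^ j) u = v := ⟨j0, Nat.pos_of_ne_zero hj0pos, hj0⟩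
  classical
  set j := Nat.find hex with hjdef
  obtain ⟨hjpos, hj⟩ := Nat.find_spec hex
  set S : Finset (Fin m) := (Finset.range j).image (fun k => (π ^ k) u) with hSdef
  have huS : u ∈ S := Finset.mem_image.2 ⟨0, Finset.mem_range.2 hjpos, by simp⟩
  have hvS : v ∉ S := by
    intro hv
    obtain ⟨k, hk, hk2⟩ := Finset.mem_image.1 hv
    rcases Nat.eq_zero_or_pos k with rfl | hkpos
    · simp at hk2; exact huv hk2
    · exact absurd (Nat.find_le ⟨hkpos, hk2⟩) (not_le.2 (Finset.mem_range.1 hk))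
  have hSinv : ∀ y ∈ S, σ y ∈ S := by
    intro y hy
    obtain ⟨k, hk, rfl⟩ := Finset.mem_image.1 hy
    have hk' := Finset.mem_range.1 hk
    rcases eq_or_ne (π ((π ^ k) u)) v with h | h
    · have : σ ((π ^ k) u) = u := by rw [hval, h, Equiv.swap_apply_right]
      rw [this]; exact huS
    rcases eq_or_ne (π ((π ^ k) u)) u with h2 | h2
    · exfalso
      have hku : (π ^ (k+1)) u = u := by rw [pow_succ', Equiv.Perm.mul_apply, h2]
      set r := j - (k+1) with hrdef
      have hrj : r + (k+1) = j := Nat.sub_add_cancel (Nat.succ_le_of_lt hk')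
      have hrv : (π ^ r) u = v := by
        have : (π ^ j) u = (π ^ r) ((π ^ (k+1)) u) := by
          rw [← Equiv.Perm.mul_apply, ← pow_add, hrj]
        rw [hku] at this
        rw [← this, hj]
      have hrpos : 0 < r := by
        rcases Nat.eq_zero_or_pos r with hr0 | hr; · exfalso; rw [hr0] at hrv; simp at hrv; exact huv hrv
        exact hr
      have : j ≤ r := Nat.find_le ⟨hrpos, hrv⟩
      omega
    · have : σ ((π ^ k) u) = π ((π ^ k) u) := by
        rw [hval, Equiv.swap_apply_of_ne_of_ne h2 h]
      rw [this]
      rcases Nat.lt_or_ge (k+1) j with hlt | hge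
      · exact Finset.mem_image.2 ⟨k+1, Finset.mem_range.2 hlt, by rw [pow_succ', Equiv.Perm.mul_apply]⟩
      · exfalso
        have hkj : k + 1 = j := le_antisymm (Nat.succ_le_of_lt hk') hge
        apply h
        rw [← Equiv.Perm.mul_apply, ← pow_succ', hkj, hj]
  intro hcon
  obtain ⟨i, _, hi⟩ := hcon.exists_pow_eq'
  exact hvS (hi ▸ pow_mem_of_mapsTo hSinv huS i)

end P3
section P4
variable {m : ℕ}
open Equiv Equiv.Perm Finset

lemma nu_merge {π : Equiv.Perm (Fin m)} {u v : Fin m} (huv : u ≠ v)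
    (hnc : ¬ π.SameCycle u v) : nu π = nu (Equiv.swap u v * π) + 1 := by
  set σ := Equiv.swap u v * π with hσ
  set Bu := blk π u with hBu
  set Bv := blk π v with hBv
  set U := Bu ∪ Bv with hU
  have hBne : Bu ≠ Bv := fun h => hnc (blk_eq_iff.1 h)
  have hblk := blk_swap_mul huv hnc
  have huU : u ∈ U := Finset.mem_union_left _ (self_mem_blk π u)
  have hvU : v ∈ U := Finset.mem_union_right _ (self_mem_blk π v)
  have hBuI : Bu ∈ univ.image (blk π) := Finset.mem_image.2 ⟨u, Finset.mem_univ u, rfl⟩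
  have hBvI : Bv ∈ univ.image (blk π) := Finset.mem_image.2 ⟨v, Finset.mem_univ v, rfl⟩
  have himg : univ.image (blk σ) = insert U (((univ.image (blk π)).erase Bu).erase Bv) := by
    ext C
    simp only [Finset.mem_image, Finset.mem_insert, Finset.mem_erase]
    constructor
    · rintro ⟨x, -, rfl⟩
      rw [hblk x]
      rcases em (x ∈ U) with hx | hx
      · rw [if_pos hx]; exact Or.inl rfl
      · rw [if_neg hx]
        refine Or.inr ⟨?_, ?_, ⟨x, Finset.mem_univ x, rfl⟩⟩
        · intro h; exact hx (Finset.mem_union_right _ (h ▸ self_mem_blk π x))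
        · intro h; exact hx (Finset.mem_union_left _ (h ▸ self_mem_blk π x))
    · rintro (rfl | ⟨hCv, hCu, ⟨x, -, rfl⟩⟩)
      · refine ⟨u, Finset.mem_univ u, ?_⟩
        rw [hblk u, if_pos huU]
      · refine ⟨x, Finset.mem_univ x, ?_⟩
        have hx : x ∉ U := by
          intro hx
          rcases Finset.mem_union.1 hx with h | h
          · exact hCu (blk_congr h)
          · exact hCv (blk_congr h)
        rw [hblk x, if_neg hx]
  have hUnotin : U ∉ ((univ.image (blk π)).erase Bu).erase Bv := by
    intro h
    obtain ⟨x, -, hx⟩ := Finset.mem_image.1 (Finset.mem_of_mem_erase (Finset.mem_of_mem_erase h))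
    have h1 : u ∈ blk π x := by rw [hx]; exact huU
    have h2 : Bu = blk π x := blk_congr h1
    rw [hx] at h2
    exact (Finset.mem_erase.1 (Finset.mem_of_mem_erase h)).1 h2.symm
  have hcard2 : 2 ≤ nu π := by
    have : ({Bu, Bv} : Finset (Finset (Fin m))) ⊆ univ.image (blk π) := by
      intro C hC
      rcases Finset.mem_insert.1 hC with rfl | hC
      · exact hBuI
      · rw [Finset.mem_singleton.1 hC]; exact hBvI
    calc 2 = ({Bu, Bv} : Finset (Finset (Fin m))).card := (Finset.card_pair hBne).symm
    _ ≤ _ := Finset.card_le_card this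
  have : nu σ = nu π - 2 + 1 := by
    rw [nu, himg, Finset.card_insert_of_notMem hUnotin,
      Finset.card_erase_of_mem (Finset.mem_erase.2 ⟨hBne.symm, hBvI⟩),
      Finset.card_erase_of_mem hBuI]
    rfl
  omega

lemma blk_subset_merge {π : Equiv.Perm (Fin m)} {u v : Fin m} (huv : u ≠ v)
    (hnc : ¬ π.SameCycle u v) (x : Fin m) : blk π x ⊆ blk (Equiv.swap u v * π) x := by
  rw [blk_swap_mul huv hnc x]
  rcases em (x ∈ blk π u ∪ blk π v) with hx | hx
  · rw [if_pos hx]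
    rcases Finset.mem_union.1 hx with h | h
    · rw [blk_congr h]; exact Finset.subset_union_left
    · rw [blk_congr h]; exact Finset.subset_union_right
  · rw [if_neg hx]

lemma nu_split {π : Equiv.Perm (Fin m)} {u v : Fin m} (huv : u ≠ v)
    (hc : π.SameCycle u v) : nu (Equiv.swap u v * π) = nu π + 1 := by
  set σ := Equiv.swap u v * π with hσ
  have hns : ¬ σ.SameCycle u v := not_sameCycle_swap_mul huv hc
  have hπ : Equiv.swap u v * σ = π := by
    rw [hσ, ← mul_assoc, Equiv.swap_mul_self, one_mul]
  have := nu_merge huv hns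
  rw [hπ] at this
  omega

lemma nu_swap_mul_ge {π : Equiv.Perm (Fin m)} {u v : Fin m} (huv : u ≠ v) :
    nu π ≤ nu (Equiv.swap u v * π) + 1 := by
  rcases em (π.SameCycle u v) with hc | hc
  · rw [nu_split huv hc]; omega
  · exact (nu_merge huv hc).le

end P4
section P5
variable {m : ℕ}
open Equiv Equiv.Perm Finset

lemma exists_swap_factorization (π : Equiv.Perm (Fin m)) :
    ∃ l : List (Equiv.Perm (Fin m)), (∀ t ∈ l, t.IsSwap) ∧ l.prod = π ∧
      l.length = m - nu π := by
  suffices h : ∀ k (π : Equiv.Perm (Fin m)), m - nu π = k →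
      ∃ l : List (Equiv.Perm (Fin m)), (∀ t ∈ l, t.IsSwap) ∧ l.prod = π ∧
        l.length = m - nu π from h _ π rfl
  intro k
  induction k using Nat.strong_induction_on with
  | _ k ih =>
    intro π hk
    rcases eq_or_ne π 1 with rfl | hne
    · exact ⟨[], by simp, by simp, by simp [nu_one]⟩
    · obtain ⟨x, hx⟩ : ∃ x, π x ≠ x := by
        by_contra h'; push_neg at h'; exact hne (Equiv.ext h')
      set σ := Equiv.swap x (π x) * π with hσ
      have hsplit : nu σ = nu π + 1 := nu_split (Ne.symm hx) ⟨1, rfl⟩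
      have hle : nu σ ≤ m := nu_le σ
      have hklt : m - nu σ < k := by omega
      obtain ⟨l, hl1, hl2, hl3⟩ := ih _ hklt σ rfl
      refine ⟨Equiv.swap x (π x) :: l, ?_, ?_, ?_⟩
      · intro t ht
        rcases List.mem_cons.1 ht with rfl | ht
        · exact ⟨x, π x, Ne.symm hx, rfl⟩
        · exact hl1 t ht
      · rw [List.prod_cons, hl2, hσ, ← mul_assoc, Equiv.swap_mul_self, one_mul]
      · simp only [List.length_cons, hl3]
        omega

lemma nu_prod_swaps (l : List (Equiv.Perm (Fin m))) (h : ∀ t ∈ l, t.IsSwap) :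
    m ≤ nu l.prod + l.length := by
  induction l with
  | nil => simp [nu_one]
  | cons t l ih =>
    obtain ⟨u, v, huv, rfl⟩ := h t List.mem_cons_self
    have h1 := nu_swap_mul_ge (π := l.prod) huv
    have h2 := ih (fun t ht => h t (List.mem_cons_of_mem _ ht))
    simp only [List.prod_cons, List.length_cons]
    omega

lemma absLength_eq (π : Equiv.Perm (Fin m)) : absLength π = m - nu π := by
  obtain ⟨l, hl1, hl2, hl3⟩ := exists_swap_factorization π
  have hmem : m - nu π ∈ {k | ∃ l : List (Equiv.Perm (Fin m)),
      l.length = k ∧ (∀ t ∈ l, t.IsSwap) ∧ l.prod = π} := ⟨l, hl3, hl1, hl2⟩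
  apply le_antisymm
  · exact Nat.sInf_le hmem
  · have hne : {k | ∃ l : List (Equiv.Perm (Fin m)),
        l.length = k ∧ (∀ t ∈ l, t.IsSwap) ∧ l.prod = π}.Nonempty := ⟨_, hmem⟩
    obtain ⟨l', hl'1, hl'2, hl'3⟩ := Nat.sInf_mem hne
    have := nu_prod_swaps l' hl'2
    rw [hl'3] at this
    rw [absLength] at *
    omega

lemma exists_min_factorization (π : Equiv.Perm (Fin m)) :
    ∃ l : List (Equiv.Perm (Fin m)), (∀ t ∈ l, t.IsSwap) ∧ l.prod = π ∧
      l.length = absLength π := by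
  obtain ⟨l, hl1, hl2, hl3⟩ := exists_swap_factorization π
  have hne : {k | ∃ l : List (Equiv.Perm (Fin m)),
      l.length = k ∧ (∀ t ∈ l, t.IsSwap) ∧ l.prod = π}.Nonempty := ⟨_, ⟨l, hl3, hl1, hl2⟩⟩
  obtain ⟨l', hl'1, hl'2, hl'3⟩ := Nat.sInf_mem hne
  exact ⟨l', hl'2, hl'3, hl'1⟩

lemma absLength_mul_le (π σ : Equiv.Perm (Fin m)) :
    absLength (π * σ) ≤ absLength π + absLength σ := by
  obtain ⟨l1, h11, h12, h13⟩ := exists_min_factorization π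
  obtain ⟨l2, h21, h22, h23⟩ := exists_min_factorization σ
  have : absLength (π * σ) ≤ (l1 ++ l2).length := by
    apply Nat.sInf_le
    refine ⟨l1 ++ l2, rfl, ?_, ?_⟩
    · intro t ht
      rcases List.mem_append.1 ht with h | h
      · exact h11 t h
      · exact h21 t h
    · rw [List.prod_append, h12, h22]
  rw [List.length_append, h13, h23] at this
  exact this

lemma absLength_one : absLength (1 : Equiv.Perm (Fin m)) = 0 := by
  rw [absLength_eq, nu_one]; omega

lemma eq_one_of_absLength_eq_zero {π : Equiv.Perm (Fin m)} (h : absLength π = 0) : π = 1 := by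
  rw [absLength_eq] at h
  exact eq_one_of_nu_eq π (le_antisymm (nu_le π) (by omega))

lemma absLength_swap {u v : Fin m} (huv : u ≠ v) : absLength (Equiv.swap u v) = 1 := by
  have h1 : ¬ (1 : Equiv.Perm (Fin m)).SameCycle u v := by
    rintro ⟨i, hi⟩
    simp at hi
    exact huv hi
  have := nu_merge huv h1
  rw [mul_one] at this
  rw [absLength_eq]
  rw [nu_one] at this
  have hm : 1 ≤ m := by
    rcases Nat.eq_zero_or_pos m with rfl | h
    · exact absurd u.2 (by omega)
    · exact h
  omega

lemma absLe_refl (π : Equiv.Perm (Fin m)) : absLe π π := by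
  rw [absLe, inv_mul_cancel, absLength_one]
  omega

lemma absLe_trans {π σ τ : Equiv.Perm (Fin m)} (h1 : absLe π σ) (h2 : absLe σ τ) :
    absLe π τ := by
  rw [absLe] at *
  have ht1 : absLength (π⁻¹ * τ) ≤ absLength (π⁻¹ * σ) + absLength (σ⁻¹ * τ) := by
    have : π⁻¹ * τ = (π⁻¹ * σ) * (σ⁻¹ * τ) := by group
    rw [this]; exact absLength_mul_le _ _
  have ht2 : absLength τ ≤ absLength π + absLength (π⁻¹ * τ) := by
    have : τ = π * (π⁻¹ * τ) := by group
    conv_lhs => rw [this]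
    exact absLength_mul_le _ _
  omega

lemma absLe_iff_nu {π σ : Equiv.Perm (Fin m)} :
    absLe π σ ↔ nu π + nu (π⁻¹ * σ) = m + nu σ := by
  rw [absLe, absLength_eq, absLength_eq, absLength_eq]
  have h1 := nu_le π
  have h2 := nu_le σ
  have h3 := nu_le (π⁻¹ * σ)
  omega

lemma absLe_swap_mul {π : Equiv.Perm (Fin m)} {u v : Fin m} (huv : u ≠ v)
    (hnc : ¬ π.SameCycle u v) : absLe π (Equiv.swap u v * π) := by
  rw [absLe]
  have h1 := nu_merge huv hnc
  have h2 : π⁻¹ * (Equiv.swap u v * π) = Equiv.swap (π⁻¹ u) (π⁻¹ v) := by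
    rw [Equiv.swap_apply_apply]
    group
  rw [h2, absLength_swap (fun h => huv (by simpa using congrArg π h)),
    absLength_eq, absLength_eq]
  have := nu_le π
  omega

end P5
section P6
open Equiv Equiv.Perm Finset

/-- Crossing pattern between two blocks. -/
def CrossPat {m : ℕ} (B C : Finset (Fin m)) : Prop :=
  ∃ a b c d : Fin m, a < b ∧ b < c ∧ c < d ∧ a ∈ B ∧ c ∈ B ∧ b ∈ C ∧ d ∈ C

def NoCross {m : ℕ} (P : Set (Finset (Fin m))) : Prop :=
  ∀ B ∈ P, ∀ C ∈ P, B ≠ C → ¬ CrossPat B C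

lemma noCross_iff {m : ℕ} (P : Set (Finset (Fin m))) :
    NoCross P ↔ ¬ ∃ (a b c d : Fin m) (B C : Finset (Fin m)), B ∈ P ∧ C ∈ P ∧ B ≠ C ∧
      a < b ∧ b < c ∧ c < d ∧ a ∈ B ∧ c ∈ B ∧ b ∈ C ∧ d ∈ C := by
  constructor
  · rintro h ⟨a, b, c, d, B, C, hB, hC, hne, h1, h2, h3, h4, h5, h6, h7⟩
    exact h B hB C hC hne ⟨a, b, c, d, h1, h2, h3, h4, h5, h6, h7⟩
  · rintro h B hB C hC hne ⟨a, b, c, d, h1, h2, h3, h4, h5, h6, h7⟩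
    exact h ⟨a, b, c, d, B, C, hB, hC, hne, h1, h2, h3, h4, h5, h6, h7⟩

lemma swap_chain_prod (n : ℕ) (b a : ℕ) (hab : a + b ≤ n) (x : Fin (n + 1)) :
    ((List.ofFn fun j : Fin b =>
        Equiv.swap (⟨a + j, by have := j.2; omega⟩ : Fin (n + 1)) ⟨a + j + 1, by have := j.2; omega⟩).prod) x =
      if x.val < a then x
      else if x.val < a + b then x + 1
      else if x.val = a + b then ⟨a, by omega⟩
      else x := by
  induction b generalizing a with
  | zero =>
    simp only [List.ofFn_zero, List.prod_nil, Equiv.Perm.one_apply, Nat.add_zero]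
    split_ifs with h1 h2
    · rfl
    · exact Fin.ext (show x.val = ((⟨a, by omega⟩ : Fin (n+1)) : ℕ) from h2)
    · rfl
  | succ b ih =>
    have hab' : (a + 1) + b ≤ n := by omega
    rw [List.ofFn_succ, List.prod_cons, Equiv.Perm.mul_apply]
    have hlist : (List.ofFn fun i : Fin b =>
        Equiv.swap (⟨a + (i.succ : Fin (b+1)).val, by have := i.2; simp only [Fin.val_succ]; omega⟩ : Fin (n + 1))
          ⟨a + (i.succ : Fin (b+1)).val + 1, by have := i.2; simp only [Fin.val_succ]; omega⟩)
        = (List.ofFn fun j : Fin b =>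
        Equiv.swap (⟨a + 1 + j, by have := j.2; omega⟩ : Fin (n + 1)) ⟨a + 1 + j + 1, by have := j.2; omega⟩) := by
      congr 1
      funext j
      congr 1 <;> exact Fin.ext (by simp only [Fin.val_succ]; omega)
    have hhead : Equiv.swap (⟨a + ((0 : Fin (b+1)) : ℕ), by have := Fin.is_lt (0 : Fin (b+1)); omega⟩ : Fin (n+1))
        ⟨a + ((0 : Fin (b+1)) : ℕ) + 1, by have := Fin.is_lt (0 : Fin (b+1)); omega⟩
        = Equiv.swap (⟨a, by omega⟩ : Fin (n+1)) ⟨a + 1, by omega⟩ := by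
      congr 1 <;> exact Fin.ext (by simp)
    rw [hhead, hlist, ih (a + 1) hab']
    have hx := x.2
    rcases Nat.lt_trichotomy x.val a with h1 | h1 | h1
    · rw [if_pos (by omega : x.val < a + 1), if_pos h1]
      apply Equiv.swap_apply_of_ne_of_ne <;> (intro h; apply_fun Fin.val at h; simp at h; omega)
    · have hva : (x + 1).val = x.val + 1 :=
        Fin.val_add_one_of_lt (by rw [Fin.lt_iff_val_lt_val, Fin.val_last]; omega)
      rw [if_pos (by omega : x.val < a + 1), if_neg (by omega : ¬ x.val < a),
        if_pos (by omega : x.val < a + (b + 1))]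
      have hxa : x = (⟨a, by omega⟩ : Fin (n+1)) := Fin.ext h1
      rw [hxa, Equiv.swap_apply_left]
      rw [hxa] at hva
      exact (Fin.ext (by rw [hva])).symm
    · rw [if_neg (by omega : ¬ x.val < a + 1), if_neg (by omega : ¬ x.val < a)]
      rcases Nat.lt_trichotomy x.val ((a + 1) + b) with h2 | h2 | h2
      · have hva : (x + 1).val = x.val + 1 :=
          Fin.val_add_one_of_lt (by rw [Fin.lt_iff_val_lt_val, Fin.val_last]; omega)
        rw [if_pos h2, if_pos (by omega : x.val < a + (b + 1))]
        apply Equiv.swap_apply_of_ne_of_ne <;> (intro h; apply_fun Fin.val at h; rw [hva] at h; simp at h; omega)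
      · rw [if_neg (by omega), if_pos h2, if_neg (by omega : ¬ x.val < a + (b + 1)),
          if_pos (by omega : x.val = a + (b + 1)), Equiv.swap_apply_right]
      · rw [if_neg (by omega), if_neg (by omega), if_neg (by omega : ¬ x.val < a + (b + 1)),
          if_neg (by omega : ¬ x.val = a + (b + 1))]
        apply Equiv.swap_apply_of_ne_of_ne <;> (intro h; apply_fun Fin.val at h; simp at h; omega)

lemma coxeterA_apply (n : ℕ) (x : Fin (n + 1)) : coxeterA n x = x + 1 := by
  have hfun : (fun i : Fin n => Equiv.swap i.castSucc i.succ)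
      = (fun j : Fin n => Equiv.swap (⟨0 + j, by have := j.2; omega⟩ : Fin (n + 1)) ⟨0 + j + 1, by have := j.2; omega⟩) := by
    funext j
    congr 1 <;> exact Fin.ext (by simp)
  rw [coxeterA, hfun, swap_chain_prod n n 0 (by omega) x]
  have hx := x.2
  rcases Nat.lt_trichotomy x.val n with h1 | h1 | h1
  · rw [if_neg (by omega), if_pos (by omega)]
  · have hxl : x = Fin.last n := Fin.ext (by rw [Fin.val_last]; exact h1)
    rw [if_neg (by omega), if_neg (by omega), if_pos (by omega), hxl, Fin.last_add_one]
    exact Fin.ext (by simp)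
  · omega

end P6
section P7
open Equiv Equiv.Perm Finset

lemma nxt_univ (n : ℕ) (x : Fin (n + 1)) : nxt (univ : Finset (Fin (n + 1))) x = x + 1 := by
  rcases Nat.lt_trichotomy x.val n with h1 | h1 | h1
  · have hlt : x < x + 1 := by
      rw [Fin.lt_iff_val_lt_val, Fin.val_add_one_of_lt (by rw [Fin.lt_iff_val_lt_val, Fin.val_last]; omega)]
      omega
    apply nxt_eq_of_lt (Finset.mem_univ _) hlt
    intro y _ hxy
    rw [Fin.le_iff_val_le_val, Fin.val_add_one_of_lt (by rw [Fin.lt_iff_val_lt_val, Fin.val_last]; omega)]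
    rw [Fin.lt_iff_val_lt_val] at hxy
    omega
  · have hxl : x = Fin.last n := Fin.ext (by rw [Fin.val_last]; exact h1)
    have hmax : ∀ y ∈ (univ : Finset (Fin (n + 1))), y ≤ x := fun y _ => hxl ▸ Fin.le_last y
    rw [nxt_eq_of_max Finset.univ_nonempty hmax, hxl, Fin.last_add_one]
    apply le_antisymm
    · exact Finset.min'_le _ _ (Finset.mem_univ _)
    · exact Finset.le_min' _ _ _ (fun y _ => Fin.zero_le y)
  · exact absurd x.2 (by omega)

lemma blk_coxeterA (n : ℕ) (x : Fin (n + 1)) : blk (coxeterA n) x = univ := by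
  apply blk_eq_of_aligned_blocks (B := fun _ => (univ : Finset (Fin (n + 1))))
    (fun y => Finset.mem_univ y) (fun _ _ _ => rfl)
  intro y
  rw [coxeterA_apply, nxt_univ]

lemma aligned_coxeterA (n : ℕ) : Aligned (coxeterA n) := by
  intro x
  rw [blk_coxeterA, coxeterA_apply, nxt_univ]

lemma nu_coxeterA (n : ℕ) : nu (coxeterA n) = 1 := by
  unfold nu
  have : Finset.univ.image (blk (coxeterA n)) = {(univ : Finset (Fin (n + 1)))} := by
    ext B
    simp only [Finset.mem_image, Finset.mem_singleton]
    constructor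
    · rintro ⟨x, -, rfl⟩; exact blk_coxeterA n x
    · rintro rfl; exact ⟨0, Finset.mem_univ _, blk_coxeterA n 0⟩
  rw [this, Finset.card_singleton]

lemma noCross_coxeterA (n : ℕ) : NoCross (cycleBlocks (coxeterA n)) := by
  rintro B ⟨x, rfl⟩ C ⟨y, rfl⟩ hne
  exact absurd (show blk (coxeterA n) x = blk (coxeterA n) y by
    rw [blk_coxeterA, blk_coxeterA]) hne

lemma cycleBlocks_nonempty {m : ℕ} (π : Equiv.Perm (Fin m)) :
    ∀ B ∈ cycleBlocks π, B.Nonempty := by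
  rintro B ⟨a, rfl⟩
  exact blk_nonempty a

lemma cycleBlocks_partition {m : ℕ} (π : Equiv.Perm (Fin m)) :
    ∀ x : Fin m, ∃! B, B ∈ cycleBlocks π ∧ x ∈ B := by
  intro x
  refine ⟨blk π x, ⟨blk_mem_cycleBlocks π x, self_mem_blk π x⟩, ?_⟩
  rintro B ⟨hB, hxB⟩
  exact eq_blk_of_mem hB hxB

lemma crossPat_mono {m : ℕ} {B B' C C' : Finset (Fin m)} (hB : B ⊆ B') (hC : C ⊆ C')
    (h : CrossPat B C) : CrossPat B' C' := by
  obtain ⟨a, b, c, d, h1, h2, h3, h4, h5, h6, h7⟩ := h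
  exact ⟨a, b, c, d, h1, h2, h3, hB h4, hB h5, hC h6, hC h7⟩

end P7
section P8
variable {m : ℕ}
open Equiv Equiv.Perm Finset

lemma nxt_le {S : Finset (Fin m)} {x y : Fin m} (hy : y ∈ S) (hxy : x < y) : nxt S x ≤ y :=
  (lt_nxt_of_lt hy hxy).2.1

lemma split_preserves {π : Equiv.Perm (Fin m)} (hal : Aligned π) {u v : Fin m} (huv : u < v)
    (hc : π.SameCycle u v) :
    Aligned (Equiv.swap u v * π) ∧ (∀ x, blk (Equiv.swap u v * π) x ⊆ blk π x) ∧
      (NoCross (cycleBlocks π) → NoCross (cycleBlocks (Equiv.swap u v * π))) := by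
  set A := blk π u with hA
  set A1 := A.filter (fun y => u ≤ y ∧ y < v) with hA1def
  set A2 := A \ A1 with hA2def
  have hA1mem : ∀ {y : Fin m}, y ∈ A1 ↔ (y ∈ A ∧ u ≤ y ∧ y < v) := fun {y} => Finset.mem_filter
  have hA2mem : ∀ {y : Fin m}, y ∈ A2 ↔ (y ∈ A ∧ (y < u ∨ v ≤ y)) := by
    intro y
    rw [hA2def, Finset.mem_sdiff]
    constructor
    · rintro ⟨hyA, hy1⟩
      refine ⟨hyA, ?_⟩
      rw [hA1mem] at hy1
      push_neg at hy1
      rcases le_or_gt u y with h | h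
      · exact Or.inr (hy1 hyA h)
      · exact Or.inl h
    · rintro ⟨hyA, hy⟩
      refine ⟨hyA, ?_⟩
      rw [hA1mem]
      push_neg
      intro _ hu
      rcases hy with h | h
      · exact absurd hu (not_le.2 h)
      · exact h
  have huA : u ∈ A := self_mem_blk π u
  have hvA : v ∈ A := mem_blk.2 hc
  have huA1 : u ∈ A1 := hA1mem.2 ⟨huA, le_refl u, huv⟩
  have hvA2 : v ∈ A2 := hA2mem.2 ⟨hvA, Or.inr (le_refl v)⟩
  have hblkA : ∀ {x : Fin m}, x ∈ A → blk π x = A := fun {x} hx => blk_congr hx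
  have hdisj : ∀ {x y : Fin m}, x ∉ A → y ∈ blk π x → y ∉ A := by
    intro x y hx hy hyA
    apply hx
    have h1 : blk π y = blk π x := blk_congr hy
    have h2 : blk π y = A := hblkA hyA
    rw [← h2, h1]
    exact self_mem_blk π x
  have hA1notA2 : ∀ {y : Fin m}, y ∈ A1 → y ∉ A2 := by
    intro y h1 h2
    obtain ⟨_, h3, h4⟩ := hA1mem.1 h1
    rcases (hA2mem.1 h2).2 with h | h
    · exact absurd h3 (not_le.2 h)
    · exact absurd h4 (not_lt.2 h)
  -- the alignment of the split permutation
  have hal' : ∀ x, (Equiv.swap u v * π) x =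
      nxt (if x ∈ A1 then A1 else if x ∈ A2 then A2 else blk π x) x := by
    intro x
    rw [Equiv.Perm.mul_apply]
    by_cases hx1 : x ∈ A1
    · rw [if_pos hx1]
      obtain ⟨hxA, hux, hxv⟩ := hA1mem.1 hx1
      have hπx : π x = nxt A x := by rw [hal x, hblkA hxA]
      by_cases hz : ∃ z ∈ A1, x < z
      · obtain ⟨z, hzA1, hxz⟩ := hz
        have h3 := lt_nxt_of_lt (hA1mem.1 hzA1).1 hxz
        have hwA1 : nxt A x ∈ A1 :=
          hA1mem.2 ⟨h3.2.2, le_trans hux (le_of_lt h3.1), lt_of_le_of_lt h3.2.1 (hA1mem.1 hzA1).2.2⟩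
        have hnxt1 : nxt A1 x = nxt A x :=
          nxt_eq_of_lt hwA1 h3.1 (fun y hy hxy => nxt_le (hA1mem.1 hy).1 hxy)
        rw [hnxt1, hπx]
        apply Equiv.swap_apply_of_ne_of_ne
        · exact ne_of_gt (lt_of_le_of_lt hux h3.1)
        · exact ne_of_lt (hA1mem.1 hwA1).2.2
      · push_neg at hz
        have hminA1 : A1.min' ⟨u, huA1⟩ = u :=
          le_antisymm (Finset.min'_le _ _ huA1) (Finset.le_min' _ _ _ (fun y hy => (hA1mem.1 hy).2.1))
        have hnxt1 : nxt A1 x = u := by rw [nxt_eq_of_max ⟨u, huA1⟩ hz, hminA1]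
        have h3 := lt_nxt_of_lt hvA hxv
        have hwv : nxt A x = v := by
          rcases lt_or_eq_of_le h3.2.1 with h | h
          · exfalso
            have : nxt A x ∈ A1 := hA1mem.2 ⟨h3.2.2, le_trans hux (le_of_lt h3.1), h⟩
            exact absurd (hz _ this) (not_le.2 h3.1)
          · exact h
        rw [hnxt1, hπx, hwv, Equiv.swap_apply_right]
    · by_cases hx2 : x ∈ A2
      · rw [if_neg hx1, if_pos hx2]
        obtain ⟨hxA, hxcase⟩ := hA2mem.1 hx2
        have hπx : π x = nxt A x := by rw [hal x, hblkA hxA]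
        rcases hxcase with hxu | hvx
        · -- x < u
          have h3 := lt_nxt_of_lt huA hxu
          rcases lt_or_eq_of_le h3.2.1 with h | h
          · -- nxt A x < u, stays in A2
            have hwA2 : nxt A x ∈ A2 := hA2mem.2 ⟨h3.2.2, Or.inl h⟩
            have hnxt2 : nxt A2 x = nxt A x :=
              nxt_eq_of_lt hwA2 h3.1 (fun y hy hxy => nxt_le (hA2mem.1 hy).1 hxy)
            rw [hnxt2, hπx]
            apply Equiv.swap_apply_of_ne_of_ne
            · exact ne_of_lt h
            · exact ne_of_lt (lt_trans h huv)
          · -- nxt A x = u : wraps into A1, so next in A2 is v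
            have hnxt2 : nxt A2 x = v := by
              apply nxt_eq_of_lt hvA2 (lt_trans hxu huv)
              intro y hy hxy
              rcases (hA2mem.1 hy).2 with h' | h'
              · exfalso
                have := nxt_le (hA2mem.1 hy).1 hxy
                rw [h] at this
                exact absurd h' (not_lt.2 this)
              · exact h'
            rw [hnxt2, hπx, h, Equiv.swap_apply_left]
        · -- v ≤ x
          by_cases hze : ∃ z ∈ A, x < z
          · obtain ⟨z, hzA, hxz⟩ := hze
            have h3 := lt_nxt_of_lt hzA hxz
            have hwA2 : nxt A x ∈ A2 :=
              hA2mem.2 ⟨h3.2.2, Or.inr (le_of_lt (lt_of_le_of_lt hvx h3.1))⟩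
            have hnxt2 : nxt A2 x = nxt A x :=
              nxt_eq_of_lt hwA2 h3.1 (fun y hy hxy => nxt_le (hA2mem.1 hy).1 hxy)
            rw [hnxt2, hπx]
            apply Equiv.swap_apply_of_ne_of_ne
            · exact ne_of_gt (lt_of_le_of_lt (le_trans (le_of_lt huv) hvx) h3.1)
            · exact ne_of_gt (lt_of_le_of_lt hvx h3.1)
          · push_neg at hze
            have hmax2 : ∀ z ∈ A2, z ≤ x := fun z hz => hze z (hA2mem.1 hz).1
            have hπx2 : π x = A.min' ⟨u, huA⟩ := by rw [hπx, nxt_eq_of_max ⟨u, huA⟩ hze]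
            have hnxt2 : nxt A2 x = A2.min' ⟨v, hvA2⟩ := nxt_eq_of_max ⟨v, hvA2⟩ hmax2
            rcases lt_or_eq_of_le (Finset.min'_le A u huA) with h | h
            · -- min A < u : it lies in A2 and equals min A2
              have hmemA2 : A.min' ⟨u, huA⟩ ∈ A2 := hA2mem.2 ⟨A.min'_mem _, Or.inl h⟩
              have : A2.min' ⟨v, hvA2⟩ = A.min' ⟨u, huA⟩ :=
                le_antisymm (Finset.min'_le _ _ hmemA2)
                  (Finset.le_min' _ _ _ (fun y hy => Finset.min'_le _ _ (hA2mem.1 hy).1))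
              rw [hnxt2, this, hπx2]
              apply Equiv.swap_apply_of_ne_of_ne
              · exact ne_of_lt h
              · exact ne_of_lt (lt_trans h huv)
            · -- min A = u : wraps to v
              have : A2.min' ⟨v, hvA2⟩ = v := by
                apply le_antisymm (Finset.min'_le _ _ hvA2)
                apply Finset.le_min'
                intro y hy
                rcases (hA2mem.1 hy).2 with h' | h'
                · exfalso
                  have := Finset.min'_le A y (hA2mem.1 hy).1
                  rw [← h] at h'
                  exact absurd this (not_le.2 h')
                · exact h'
              rw [hnxt2, this, hπx2, h]
              exact Equiv.swap_apply_left u v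
      · -- x outside A
        rw [if_neg hx1, if_neg hx2]
        have hxA : x ∉ A := by
          intro hxA
          rcases em (x ∈ A1) with h | h
          · exact hx1 h
          · exact hx2 (hA2mem.2 ⟨hxA, by
              rw [hA1mem] at h; push_neg at h
              rcases le_or_gt u x with h' | h'
              · exact Or.inr (h hxA h')
              · exact Or.inl h'⟩)
        have hπxA : π x ∉ A := hdisj hxA (mem_blk.2 ⟨1, rfl⟩)
        rw [Equiv.swap_apply_of_ne_of_ne (fun h => hπxA (by rw [h]; exact huA))
          (fun h => hπxA (by rw [h]; exact hvA))]
        exact hal x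
  -- identify the blocks
  have key : ∀ x, blk (Equiv.swap u v * π) x =
      if x ∈ A1 then A1 else if x ∈ A2 then A2 else blk π x := by
    have hmem : ∀ x : Fin m, x ∈ (if x ∈ A1 then A1 else if x ∈ A2 then A2 else blk π x) := by
      intro x
      by_cases h1 : x ∈ A1
      · rw [if_pos h1]; exact h1
      · by_cases h2 : x ∈ A2
        · rw [if_neg h1, if_pos h2]; exact h2
        · rw [if_neg h1, if_neg h2]; exact self_mem_blk π x
    have hcongr : ∀ x y : Fin m, y ∈ (if x ∈ A1 then A1 else if x ∈ A2 then A2 else blk π x) →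
        (if y ∈ A1 then A1 else if y ∈ A2 then A2 else blk π y)
          = (if x ∈ A1 then A1 else if x ∈ A2 then A2 else blk π x) := by
      intro x y hy
      by_cases h1 : x ∈ A1
      · rw [if_pos h1] at hy
        rw [if_pos h1, if_pos hy]
      · by_cases h2 : x ∈ A2
        · rw [if_neg h1, if_pos h2] at hy
          rw [if_neg h1, if_pos h2, if_neg (fun hcon => hA1notA2 hcon hy), if_pos hy]
        · rw [if_neg h1, if_neg h2] at hy
          have hxA : x ∉ A := by
            intro hxA
            rcases em (x ∈ A1) with h | h
            · exact h1 h
            · exact h2 (hA2mem.2 ⟨hxA, by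
                rw [hA1mem] at h; push_neg at h
                rcases le_or_gt u x with h' | h'
                · exact Or.inr (h hxA h')
                · exact Or.inl h'⟩)
          have hyA : y ∉ A := hdisj hxA hy
          have hy1 : y ∉ A1 := fun hcon => hyA (hA1mem.1 hcon).1
          have hy2 : y ∉ A2 := fun hcon => hyA (hA2mem.1 hcon).1
          rw [if_neg h1, if_neg h2, if_neg hy1, if_neg hy2]
          exact blk_congr hy
    exact blk_eq_of_aligned_blocks
      (B := fun x => if x ∈ A1 then A1 else if x ∈ A2 then A2 else blk π x)
      hmem hcongr hal'
  have halS : Aligned (Equiv.swap u v * π) := by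
    intro x
    rw [key x]
    exact hal' x
  have hsub : ∀ x, blk (Equiv.swap u v * π) x ⊆ blk π x := by
    intro x
    rw [key x]
    by_cases h1 : x ∈ A1
    · simp only [if_pos h1]
      rw [hblkA (hA1mem.1 h1).1, hA1def]
      exact Finset.filter_subset _ _
    · by_cases h2 : x ∈ A2
      · simp only [if_neg h1, if_pos h2]
        rw [hblkA (hA2mem.1 h2).1, hA2def]
        exact Finset.sdiff_subset
      · simp only [if_neg h1, if_neg h2]
        exact Finset.Subset.refl _
  refine ⟨halS, hsub, ?_⟩
  intro hNC
  rintro B' hB' C' hC' hne hcross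
  obtain ⟨b1, hb1⟩ := hB'
  obtain ⟨c1, hc1⟩ := hC'
  have hb1' : B' = blk (Equiv.swap u v * π) b1 := hb1
  have hc1' : C' = blk (Equiv.swap u v * π) c1 := hc1
  subst hb1' hc1'
  by_cases hhost : blk π b1 = blk π c1
  · -- same host block: must be the A1/A2 pair
    have hAhost : b1 ∈ A ∧ c1 ∈ A := by
      by_contra hcon
      push_neg at hcon
      rcases em (b1 ∈ A) with hb | hb
      · have hc' : c1 ∉ A := hcon hb
        have : c1 ∈ blk π c1 := self_mem_blk π c1
        rw [← hhost, hblkA hb] at this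
        exact hc' this
      · -- b1 ∉ A hence c1 ∉ A, blocks both equal old blocks
        have hcA : c1 ∉ A := by
          intro hcA
          have : b1 ∈ blk π b1 := self_mem_blk π b1
          rw [hhost, hblkA hcA] at this
          exact hb this
        have e1 : blk (Equiv.swap u v * π) b1 = blk π b1 := by
          rw [key b1, if_neg (fun hcon' => hb (hA1mem.1 hcon').1),
            if_neg (fun hcon' => hb (hA2mem.1 hcon').1)]
        have e2 : blk (Equiv.swap u v * π) c1 = blk π c1 := by
          rw [key c1, if_neg (fun hcon' => hcA (hA1mem.1 hcon').1),
            if_neg (fun hcon' => hcA (hA2mem.1 hcon').1)]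
        exact hne (by rw [e1, e2, hhost])
    obtain ⟨hbA, hcA⟩ := hAhost
    -- each of the two blocks is A1 or A2
    have hform : ∀ z : Fin m, z ∈ A →
        blk (Equiv.swap u v * π) z = A1 ∨ blk (Equiv.swap u v * π) z = A2 := by
      intro z hz
      rw [key z]
      by_cases h1 : z ∈ A1
      · simp only [if_pos h1]; exact Or.inl trivial
      · have h2 : z ∈ A2 := hA2mem.2 ⟨hz, by
          rw [hA1mem] at h1; push_neg at h1
          rcases le_or_gt u z with h' | h'
          · exact Or.inr (h1 hz h')
          · exact Or.inl h'⟩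
        simp only [if_neg h1, if_pos h2]; exact Or.inr trivial
    obtain ⟨a, b, c, d, hab, hbc', hcd, haB, hcB, hbC, hdC⟩ := hcross
    rcases hform b1 hbA with e1 | e1 <;> rcases hform c1 hcA with e2 | e2
    · exact hne (e1.trans e2.symm)
    · -- B' = A1, C' = A2
      rw [e1] at haB hcB; rw [e2] at hbC hdC
      have hb' : b ∈ A1 := hA1mem.2 ⟨(hA2mem.1 hbC).1,
        le_trans (hA1mem.1 haB).2.1 (le_of_lt hab),
        lt_trans hbc' (hA1mem.1 hcB).2.2⟩
      exact hA1notA2 hb' hbC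
    · -- B' = A2, C' = A1
      rw [e1] at haB hcB; rw [e2] at hbC hdC
      have hc' : c ∈ A1 := hA1mem.2 ⟨(hA2mem.1 hcB).1,
        le_trans (hA1mem.1 hbC).2.1 (le_of_lt hbc'),
        lt_trans hcd (hA1mem.1 hdC).2.2⟩
      exact hA1notA2 hc' hcB
    · exact hne (e1.trans e2.symm)
  · -- different host blocks: transfer the crossing to π
    exact hNC (blk π b1) (blk_mem_cycleBlocks π b1) (blk π c1) (blk_mem_cycleBlocks π c1)
      hhost (crossPat_mono (hsub b1) (hsub c1) hcross)

end P8
section P9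
open Equiv Equiv.Perm Finset

lemma nu_pos {m : ℕ} [NeZero m] (π : Equiv.Perm (Fin m)) : 1 ≤ nu π := by
  rw [nu, Nat.one_le_iff_ne_zero, ← Nat.pos_iff_ne_zero, Finset.card_pos]
  exact ⟨blk π 0, Finset.mem_image.2 ⟨0, Finset.mem_univ _, rfl⟩⟩

theorem aligned_of_absLe_coxeter {n : ℕ} (π : Equiv.Perm (Fin (n + 1)))
    (h : absLe π (coxeterA n)) : Aligned π ∧ NoCross (cycleBlocks π) := by
  suffices hsuf : ∀ k (π : Equiv.Perm (Fin (n + 1))), nu π = k → absLe π (coxeterA n) →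
      Aligned π ∧ NoCross (cycleBlocks π) from hsuf _ π rfl h
  clear h π
  intro k
  induction k using Nat.strong_induction_on with
  | _ k ih =>
    intro π hk h
    have hcl : absLength (coxeterA n) = n := by
      rw [absLength_eq, nu_coxeterA]
      omega
    have hπl : absLength π = n + 1 - nu π := absLength_eq π
    have hnuπ : 1 ≤ nu π := nu_pos π
    have hnuπ' : nu π ≤ n + 1 := nu_le π
    have hlen : absLength (π⁻¹ * coxeterA n) = nu π - 1 := by
      rw [absLe] at h
      omega
    rcases eq_or_lt_of_le hnuπ with h1 | h1
    · -- nu π = 1 : π = c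
      have h0 : absLength (π⁻¹ * coxeterA n) = 0 := by omega
      have : π⁻¹ * coxeterA n = 1 := eq_one_of_absLength_eq_zero h0
      have hπc : π = coxeterA n := by
        have h2 := congrArg (π * ·) this
        simp only [← mul_assoc, mul_inv_cancel, one_mul, mul_one] at h2
        exact h2.symm
      rw [hπc]
      exact ⟨aligned_coxeterA n, noCross_coxeterA n⟩
    · -- nu π ≥ 2
      obtain ⟨l, hl1, hl2, hl3⟩ := exists_min_factorization (π⁻¹ * coxeterA n)
      rw [hlen] at hl3
      have hlne : l ≠ [] := by
        intro hcon
        rw [hcon] at hl3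
        simp at hl3
        omega
      obtain ⟨t, l', rfl⟩ := List.exists_cons_of_ne_nil hlne
      obtain ⟨a, b, hab, rfl⟩ := hl1 t List.mem_cons_self
      set π' := π * Equiv.swap a b with hπ'def
      have hprod : π⁻¹ * coxeterA n = Equiv.swap a b * l'.prod := by
        rw [← hl2, List.prod_cons]
      have hinv : π'⁻¹ * coxeterA n = l'.prod := by
        rw [hπ'def, mul_inv_rev, mul_assoc, hprod, ← mul_assoc,
          Equiv.swap_inv, Equiv.swap_mul_self, one_mul]
      have hY : absLength (π'⁻¹ * coxeterA n) ≤ nu π - 2 := by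
        have : absLength l'.prod ≤ l'.length := by
          apply Nat.sInf_le
          exact ⟨l', rfl, fun s hs => hl1 s (List.mem_cons_of_mem _ hs), rfl⟩
        rw [hinv]
        simp only [List.length_cons] at hl3
        omega
      have hX : absLength π' ≤ absLength π + 1 := by
        calc absLength π' ≤ absLength π + absLength (Equiv.swap a b) := absLength_mul_le _ _
        _ = absLength π + 1 := by rw [absLength_swap hab]
      have htri : absLength (coxeterA n) ≤ absLength π' + absLength (π'⁻¹ * coxeterA n) := by
        have : coxeterA n = π' * (π'⁻¹ * coxeterA n) := by group
        conv_lhs => rw [this]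
        exact absLength_mul_le _ _
      have hX' : absLength π' = n + 1 - nu π' := absLength_eq π'
      have hnu' : 1 ≤ nu π' := nu_pos π'
      have hnu'' : nu π' ≤ n + 1 := nu_le π'
      have hnueq : nu π' = nu π - 1 := by omega
      have habsle' : absLe π' (coxeterA n) := by
        rw [absLe]
        omega
      obtain ⟨hal', hNC'⟩ := ih (nu π') (by omega) π' rfl habsle'
      -- π = swap (π' a) (π' b) * π'
      set u := π' a with hu
      set v := π' b with hv
      have huv : u ≠ v := fun hcon => hab (π'.injective hcon)
      have hππ' : π = Equiv.swap u v * π' := by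
        rw [hu, hv, ← Equiv.mul_swap_eq_swap_mul, hπ'def, mul_assoc,
          Equiv.swap_mul_self, mul_one]
      have hsc : π'.SameCycle u v := by
        by_contra hsc
        have := nu_merge huv hsc
        rw [← hππ'] at this
        omega
      rcases lt_or_gt_of_ne huv with hlt | hlt
      · obtain ⟨ha, hs, hn⟩ := split_preserves hal' hlt hsc
        rw [hππ']
        exact ⟨ha, hn hNC'⟩
      · obtain ⟨ha, hs, hn⟩ := split_preserves hal' hlt hsc.symm
        rw [hππ', Equiv.swap_comm]
        exact ⟨ha, hn hNC'⟩

end P9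
section P10
variable {m : ℕ}
open Equiv Equiv.Perm Finset

lemma merge_step {π σ : Equiv.Perm (Fin m)}
    (hπa : Aligned π) (hπn : NoCross (cycleBlocks π)) (hσn : NoCross (cycleBlocks σ))
    (href : ∀ x, blk π x ⊆ blk σ x) (hnex : ∃ x, blk π x ≠ blk σ x) :
    ∃ π₂ : Equiv.Perm (Fin m), Aligned π₂ ∧ NoCross (cycleBlocks π₂) ∧
      (∀ x, blk π₂ x ⊆ blk σ x) ∧ nu π = nu π₂ + 1 ∧ absLe π π₂ := by
  classical
  obtain ⟨x0, hx0⟩ := hnex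
  set D := blk σ x0 with hD
  have hx0D : x0 ∈ D := self_mem_blk σ x0
  have hDblk : ∀ {e : Fin m}, e ∈ D → blk σ e = D := fun {e} he => blk_congr he
  have hDmem : D ∈ cycleBlocks σ := blk_mem_cycleBlocks σ x0
  have hsubD : ∀ {e : Fin m}, e ∈ D → blk π e ⊆ D := by
    intro e he
    rw [← hDblk he]
    exact href e
  have hDne : D.Nonempty := ⟨x0, hx0D⟩
  obtain ⟨dstar, hdD, hdmin⟩ := Finset.exists_min_image D
    (fun d => ((blk π d).max' (blk_nonempty d)).val - ((blk π d).min' (blk_nonempty d)).val) hDne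
  set C := blk π dstar with hC
  have hCne : C.Nonempty := blk_nonempty dstar
  set u := C.min' hCne with hu
  set w := C.max' hCne with hw
  have huC : u ∈ C := C.min'_mem hCne
  have hwC : w ∈ C := C.max'_mem hCne
  have huCle : ∀ t ∈ C, u ≤ t := fun t ht => C.min'_le t ht
  have hwCge : ∀ t ∈ C, t ≤ w := fun t ht => C.le_max' t ht
  have hCD : C ⊆ D := hsubD hdD
  have hCmem : C ∈ cycleBlocks π := blk_mem_cycleBlocks π dstar
  -- the chosen block is an interval of D
  have hint : ∀ e ∈ D, u ≤ e → e ≤ w → e ∈ C := by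
    intro e heD hue hew
    by_contra heC
    have hEC : blk π e ≠ C := fun hcon => heC (hcon ▸ self_mem_blk π e)
    have hEmem : blk π e ∈ cycleBlocks π := blk_mem_cycleBlocks π e
    have hue' : u < e := lt_of_le_of_ne hue (fun hcon => heC (hcon ▸ huC))
    have hew' : e < w := lt_of_le_of_ne hew (fun hcon => heC (hcon.symm ▸ hwC))
    have hEF : ∀ f ∈ blk π e, u < f ∧ f < w := by
      intro f hf
      have hfC : f ∉ C := blk_disjoint hEC f hf
      constructor
      · rcases lt_or_ge u f with h | h
        · exact h
        · exfalso
          have hfu : f < u := lt_of_le_of_ne h (fun hcon => hfC (hcon ▸ huC))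
          exact hπn (blk π e) hEmem C hCmem hEC ⟨f, u, e, w, hfu, hue', hew', hf, self_mem_blk π e, huC, hwC⟩
      · rcases lt_or_ge f w with h | h
        · exact h
        · exfalso
          have hwf : w < f := lt_of_le_of_ne h (fun hcon => hfC (hcon ▸ hwC))
          exact hπn C hCmem (blk π e) hEmem (fun hcon => hEC hcon.symm)
            ⟨u, e, w, f, hue', hew', hwf, huC, hwC, self_mem_blk π e, hf⟩
    -- span contradiction
    have h1 := hEF _ ((blk π e).min'_mem (blk_nonempty e))
    have h2 := hEF _ ((blk π e).max'_mem (blk_nonempty e))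
    have h3 := hdmin e heD
    have h4 : u.val < ((blk π e).min' (blk_nonempty e)).val := h1.1
    have h5 : ((blk π e).max' (blk_nonempty e)).val < w.val := h2.2
    have h6 : u.val ≤ w.val := Fin.le_iff_val_le_val.1 (huCle w hwC)
    have h7 : ((blk π e).min' (blk_nonempty e)).val ≤ ((blk π e).max' (blk_nonempty e)).val :=
      Fin.le_iff_val_le_val.1 ((blk π e).min'_le _ ((blk π e).max'_mem (blk_nonempty e)))
    omega
  have hCneD : C ≠ D := by
    intro hcon
    apply hx0
    have hx0C : x0 ∈ C := by rw [hcon]; exact hx0D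
    exact (blk_congr hx0C).trans hcon
  set y := nxt D w with hy
  have hyD : y ∈ D := nxt_mem hDne w
  have hycase : (w < y ∧ ∀ d ∈ D, w < d → y ≤ d) ∨ ((∀ d ∈ D, d ≤ w) ∧ (∀ d ∈ D, y ≤ d)) := by
    by_cases hex : ∃ z ∈ D, w < z
    · obtain ⟨z, hz, hwz⟩ := hex
      have h3 := lt_nxt_of_lt hz hwz
      exact Or.inl ⟨h3.1, fun d hd hwd => nxt_le hd hwd⟩
    · push_neg at hex
      have hy2 : y = D.min' hDne := nxt_eq_of_max hDne hex
      exact Or.inr ⟨hex, fun d hd => hy2 ▸ D.min'_le d hd⟩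
  have hyC : y ∉ C := by
    rcases hycase with ⟨h1, _⟩ | ⟨h1, h2⟩
    · exact fun hcon => absurd (hwCge y hcon) (not_le.2 h1)
    · intro hcon
      apply hCneD
      apply Finset.Subset.antisymm hCD
      intro e heD
      exact hint e heD (le_trans (huCle y hcon) (h2 e heD)) (h1 e heD)
  set B := blk π y with hB
  have hBne : B.Nonempty := blk_nonempty y
  have hyB : y ∈ B := self_mem_blk π y
  have hBD : B ⊆ D := hsubD hyD
  have hBC : B ≠ C := fun hcon => hyC (hcon ▸ hyB)
  have hBmem : B ∈ cycleBlocks π := blk_mem_cycleBlocks π y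
  have hCB : ∀ t ∈ B, t ∉ C := blk_disjoint hBC
  have hBpos : ∀ t ∈ B, t < u ∨ w < t := by
    intro t ht
    rcases lt_or_ge t u with h | h
    · exact Or.inl h
    rcases le_or_gt t w with h' | h'
    · exact absurd (hint t (hBD ht) h h') (hCB t ht)
    · exact Or.inr h'
  have hCu : blk π u = C := blk_congr huC
  have hnc : ¬ π.SameCycle u y := by
    intro hcon
    have h1 : blk π u = blk π y := blk_eq_iff.2 hcon
    rw [hCu, ← hB] at h1
    exact hBC h1.symm
  have huy : u ≠ y := fun hcon => hyC (hcon ▸ huC)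
  set π₂ := Equiv.swap u y * π with hπ₂
  have hmg : ∀ x, blk π₂ x = if x ∈ C ∪ B then C ∪ B else blk π x := by
    intro x
    have h1 := blk_swap_mul huy hnc x
    rw [hCu, ← hB] at h1
    exact h1
  have hAD : C ∪ B ⊆ D := Finset.union_subset hCD hBD
  -- alignment of the merged permutation
  have halign : Aligned π₂ := by
    intro x
    rw [hmg x]
    by_cases hxA : x ∈ C ∪ B
    · rw [if_pos hxA]
      rcases Finset.mem_union.1 hxA with hxC | hxB
      · -- x in C
        have hπx : π x = nxt C x := by rw [hπa x, blk_congr hxC]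
        by_cases hzc : ∃ z ∈ C, x < z
        · obtain ⟨z, hzC, hxz⟩ := hzc
          have h3 := lt_nxt_of_lt hzC hxz
          have hnA : nxt (C ∪ B) x = nxt C x := by
            apply nxt_eq_of_lt (Finset.mem_union_left _ h3.2.2) h3.1
            intro t htA hxt
            rcases Finset.mem_union.1 htA with htC | htB
            · exact nxt_le htC hxt
            · rcases hBpos t htB with h' | h'
              · exact absurd (lt_trans (lt_of_lt_of_le h' (huCle x hxC)) hxt) (lt_irrefl t)
              · exact le_trans (hwCge _ h3.2.2) (le_of_lt h')
          rw [hnA, hπ₂, Equiv.Perm.mul_apply, hπx]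
          apply Equiv.swap_apply_of_ne_of_ne
          · exact ne_of_gt (lt_of_le_of_lt (huCle x hxC) h3.1)
          · exact fun hcon => hyC (hcon ▸ h3.2.2)
        · push_neg at hzc
          have hπxu : π x = u := by rw [hπx, nxt_eq_of_max hCne hzc, ← hu]
          rw [hπ₂, Equiv.Perm.mul_apply, hπxu, Equiv.swap_apply_left]
          have hxw : x = w := le_antisymm (hwCge x hxC) (hzc w hwC)
          rcases hycase with ⟨h1, h2⟩ | ⟨h1, h2⟩
          · symm
            apply nxt_eq_of_lt (Finset.mem_union_right _ hyB) (hxw ▸ h1)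
            intro t htA hxt
            rcases Finset.mem_union.1 htA with htC | htB
            · exact absurd (hwCge t htC) (not_le.2 (hxw ▸ hxt))
            · rcases hBpos t htB with h' | h'
              · exact absurd (lt_trans (lt_of_lt_of_le h' (huCle x hxC)) hxt) (lt_irrefl t)
              · exact h2 t (hBD htB) h'
          · have hmax : ∀ t ∈ C ∪ B, t ≤ x := by
              intro t ht
              rcases Finset.mem_union.1 ht with htC | htB
              · exact hzc t htC
              · exact hxw ▸ h1 t (hBD htB)
            have hAne : (C ∪ B).Nonempty := ⟨u, Finset.mem_union_left _ huC⟩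
            rw [nxt_eq_of_max hAne hmax]
            symm
            apply le_antisymm (Finset.min'_le _ _ (Finset.mem_union_right _ hyB))
            exact Finset.le_min' _ _ _ (fun t ht => h2 t (hAD ht))
      · -- x in B
        have hπx : π x = nxt B x := by rw [hπa x, blk_congr hxB, ← hB]
        rw [hπ₂, Equiv.Perm.mul_apply, hπx]
        rcases hBpos x hxB with hxu | hwx
        · -- x < u
          by_cases hL : ∃ b ∈ B, x < b ∧ b < u
          · obtain ⟨b, hbB, hxb, hbu⟩ := hL
            have h3 := lt_nxt_of_lt hbB hxb
            have hnb : nxt B x < u := lt_of_le_of_lt h3.2.1 hbu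
            have hnA : nxt (C ∪ B) x = nxt B x := by
              apply nxt_eq_of_lt (Finset.mem_union_right _ h3.2.2) h3.1
              intro t htA hxt
              rcases Finset.mem_union.1 htA with htC | htB
              · exact le_trans (le_of_lt hnb) (huCle t htC)
              · exact nxt_le htB hxt
            rw [hnA]
            apply Equiv.swap_apply_of_ne_of_ne
            · exact ne_of_lt hnb
            · intro hcon
              rcases hycase with ⟨h1, _⟩ | ⟨_, h2⟩
              · exact absurd (lt_of_le_of_lt (le_trans (le_of_lt h1) (hcon ▸ le_refl _))
                  (lt_of_lt_of_le hnb (huCle w hwC))) (lt_irrefl _)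
              · exact absurd (lt_of_le_of_lt (h2 x (hBD hxB)) (hcon ▸ h3.1)) (lt_irrefl _)
          · push_neg at hL
            have hnA : nxt (C ∪ B) x = u := by
              apply nxt_eq_of_lt (Finset.mem_union_left _ huC) hxu
              intro t htA hxt
              rcases Finset.mem_union.1 htA with htC | htB
              · exact huCle t htC
              · rcases hBpos t htB with h' | h'
                · exact absurd (hL t htB hxt) (not_le.2 h')
                · exact le_trans (le_trans (huCle w hwC) (le_of_lt h')) (le_refl t)
            rw [hnA]
            have hnBy : nxt B x = y := by
              by_cases hbx : ∃ b ∈ B, x < b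
              · obtain ⟨b, hbB, hxb⟩ := hbx
                have hbw : w < b := by
                  rcases hBpos b hbB with h' | h'
                  · exact absurd (hL b hbB hxb) (not_le.2 h')
                  · exact h'
                rcases hycase with ⟨h1, h2⟩ | ⟨h1, h2⟩
                · apply nxt_eq_of_lt hyB (lt_of_lt_of_le hxu (le_trans (huCle w hwC) (le_of_lt h1)))
                  intro t htB hxt
                  have htw : w < t := by
                    rcases hBpos t htB with h' | h'
                    · exact absurd (hL t htB hxt) (not_le.2 h')
                    · exact h'
                  exact h2 t (hBD htB) htw
                · exact absurd (h1 b (hBD hbB)) (not_le.2 hbw)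
              · push_neg at hbx
                have h4 : nxt B x = B.min' hBne := nxt_eq_of_max hBne hbx
                rcases hycase with ⟨h1, _⟩ | ⟨_, h2⟩
                · exact absurd h1 (not_lt.2 (le_trans (le_of_lt
                    (lt_of_le_of_lt (hbx y hyB) hxu)) (huCle w hwC)))
                · rw [h4]
                  exact le_antisymm (B.min'_le y hyB) (Finset.le_min' _ _ _ (fun t ht => h2 t (hBD ht)))
            rw [hnBy, Equiv.swap_apply_right]
        · -- w < x
          have hyltx : ∀ hI : (w < y ∧ ∀ d ∈ D, w < d → y ≤ d), y ≤ x := fun hI => hI.2 x (hBD hxB) hwx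
          have hcaseI : w < y ∧ ∀ d ∈ D, w < d → y ≤ d := by
            rcases hycase with h | ⟨h1, _⟩
            · exact h
            · exact absurd (h1 x (hBD hxB)) (not_le.2 hwx)
          by_cases hbx : ∃ b ∈ B, x < b
          · obtain ⟨b, hbB, hxb⟩ := hbx
            have h3 := lt_nxt_of_lt hbB hxb
            have hnA : nxt (C ∪ B) x = nxt B x := by
              apply nxt_eq_of_lt (Finset.mem_union_right _ h3.2.2) h3.1
              intro t htA hxt
              rcases Finset.mem_union.1 htA with htC | htB
              · exact absurd (le_trans (hwCge t htC) (le_of_lt hwx)) (not_le.2 hxt)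
              · exact nxt_le htB hxt
            rw [hnA]
            apply Equiv.swap_apply_of_ne_of_ne
            · exact ne_of_gt (lt_of_le_of_lt (le_trans (huCle w hwC) (le_of_lt hwx)) h3.1)
            · exact ne_of_gt (lt_of_le_of_lt (hyltx hcaseI) h3.1)
          · push_neg at hbx
            have h4 : nxt B x = B.min' hBne := nxt_eq_of_max hBne hbx
            have hmaxA : ∀ t ∈ C ∪ B, t ≤ x := by
              intro t ht
              rcases Finset.mem_union.1 ht with htC | htB
              · exact le_trans (hwCge t htC) (le_of_lt hwx)
              · exact hbx t htB
            have hAne : (C ∪ B).Nonempty := ⟨u, Finset.mem_union_left _ huC⟩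
            have h5 : nxt (C ∪ B) x = (C ∪ B).min' hAne := nxt_eq_of_max hAne hmaxA
            rw [h4, h5]
            by_cases hBlow : ∃ b ∈ B, b < u
            · obtain ⟨b, hbB, hbu⟩ := hBlow
              have hminB : B.min' hBne < u := lt_of_le_of_lt (B.min'_le b hbB) hbu
              have hminA : (C ∪ B).min' hAne = B.min' hBne := by
                apply le_antisymm
                · exact Finset.min'_le _ _ (Finset.mem_union_right _ (B.min'_mem hBne))
                · apply Finset.le_min'
                  intro t ht
                  rcases Finset.mem_union.1 ht with htC | htB
                  · exact le_trans (le_of_lt hminB) (huCle t htC)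
                  · exact B.min'_le t htB
              rw [hminA]
              apply Equiv.swap_apply_of_ne_of_ne
              · exact ne_of_lt hminB
              · exact ne_of_lt (lt_trans hminB (lt_of_le_of_lt (huCle w hwC) hcaseI.1))
            · push_neg at hBlow
              have hBhigh : ∀ b ∈ B, w < b := by
                intro b hb
                rcases hBpos b hb with h' | h'
                · exact absurd (hBlow b hb) (not_le.2 h')
                · exact h'
              have hminBy : B.min' hBne = y := by
                apply le_antisymm (B.min'_le y hyB)
                apply Finset.le_min'
                intro t ht
                exact hcaseI.2 t (hBD ht) (hBhigh t ht)
              have hminA : (C ∪ B).min' hAne = u := by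
                apply le_antisymm (Finset.min'_le _ _ (Finset.mem_union_left _ huC))
                apply Finset.le_min'
                intro t ht
                rcases Finset.mem_union.1 ht with htC | htB
                · exact huCle t htC
                · exact le_trans (huCle w hwC) (le_of_lt (hBhigh t htB))
              rw [hminBy, hminA, Equiv.swap_apply_right]
    · rw [if_neg hxA]
      have hxC : x ∉ C := fun h => hxA (Finset.mem_union_left _ h)
      have hxB : x ∉ B := fun h => hxA (Finset.mem_union_right _ h)
      have hblkC : blk π x ≠ C := fun h => hxC (h ▸ self_mem_blk π x)
      have hblkB : blk π x ≠ B := fun h => hxB (h ▸ self_mem_blk π x)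
      have hmove : blk π (π x) = blk π x := blk_congr (mem_blk.2 ⟨1, rfl⟩)
      have hπxC : π x ∉ C := by
        intro h
        have h1 : blk π (π x) = C := blk_congr h
        exact hblkC (hmove.symm.trans h1)
      have hπxB : π x ∉ B := by
        intro h
        have h1 : blk π (π x) = B := blk_congr h
        exact hblkB (hmove.symm.trans h1)
      rw [hπ₂, Equiv.Perm.mul_apply,
        Equiv.swap_apply_of_ne_of_ne (fun h => hπxC (by rw [h]; exact huC))
          (fun h => hπxB (by rw [h]; exact hyB))]
      exact hπa x
  refine ⟨π₂, halign, ?_, ?_, nu_merge huy hnc, absLe_swap_mul huy hnc⟩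
  · -- noncrossing preserved
    rintro B' hB' C' hC' hne hcross
    obtain ⟨b1, hb1⟩ := hB'
    obtain ⟨c1, hc1⟩ := hC'
    have hb1' : B' = blk π₂ b1 := hb1
    have hc1' : C' = blk π₂ c1 := hc1
    subst hb1' hc1'
    rw [hmg b1] at hne hcross
    rw [hmg c1] at hne hcross
    -- helper: crossing of C∪B with an old π-block leads to contradiction
    have hkey : ∀ f1 : Fin m, f1 ∉ C ∪ B →
        ¬ CrossPat (C ∪ B) (blk π f1) ∧ ¬ CrossPat (blk π f1) (C ∪ B) := by
      intro f1 hf1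
      have hFC : blk π f1 ≠ C := fun h => hf1 (Finset.mem_union_left _ (h ▸ self_mem_blk π f1))
      have hFB : blk π f1 ≠ B := fun h => hf1 (Finset.mem_union_right _ (h ▸ self_mem_blk π f1))
      have hFmem : blk π f1 ∈ cycleBlocks π := blk_mem_cycleBlocks π f1
      by_cases hf1D : f1 ∈ D
      · -- F inside D
        have hFD : blk π f1 ⊆ D := hsubD hf1D
        have hFnotC : ∀ t ∈ blk π f1, t ∉ C := blk_disjoint hFC
        have hFnotB : ∀ t ∈ blk π f1, t ∉ B := blk_disjoint hFB
        have hFpos : ∀ t ∈ blk π f1, t < u ∨ w < t := by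
          intro t ht
          rcases lt_or_ge t u with h | h
          · exact Or.inl h
          rcases le_or_gt t w with h' | h'
          · exact absurd (hint t (hFD ht) h h') (hFnotC t ht)
          · exact Or.inr h'
        constructor
        · rintro ⟨a, b, c, d, hab, hbc, hcd, haA, hcA, hbF, hdF⟩
          -- a, c ∈ C ∪ B; b, d ∈ F
          rcases Finset.mem_union.1 haA with haC | haB <;> rcases Finset.mem_union.1 hcA with hcC | hcB
          · exact hπn C hCmem _ hFmem (fun h => hFC h.symm) ⟨a, b, c, d, hab, hbc, hcd, haC, hcC, hbF, hdF⟩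
          · -- a ∈ C, c ∈ B : b > w, y < b
            have hbw : w < b := by
              rcases hFpos b hbF with h' | h'
              · exact absurd (lt_trans (lt_of_lt_of_le h' (huCle a haC)) hab) (lt_irrefl b)
              · exact h'
            have hyb : y < b := by
              rcases hycase with ⟨h1, h2⟩ | ⟨h1, h2⟩
              · exact lt_of_le_of_ne (h2 b (hFD hbF) hbw) (fun h => (hFnotB b hbF) (h ▸ hyB))
              · exact absurd (h1 b (hFD hbF)) (not_le.2 hbw)
            exact hπn B hBmem _ hFmem (fun h => hFB h.symm) ⟨y, b, c, d, hyb, hbc, hcd, hyB, hcB, hbF, hdF⟩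
          · -- a ∈ B, c ∈ C : b < u, d > w, y < d
            have hbu : b < u := by
              rcases hFpos b hbF with h' | h'
              · exact h'
              · exact absurd (lt_of_le_of_lt (hwCge c hcC) (lt_of_le_of_lt (le_of_lt h') hbc))
                  (lt_irrefl c)
            have hdw : w < d := by
              rcases hFpos d hdF with h' | h'
              · exact absurd (lt_trans (lt_of_lt_of_le h' (huCle c hcC)) hcd) (lt_irrefl d)
              · exact h'
            have hyd : y < d := by
              rcases hycase with ⟨h1, h2⟩ | ⟨h1, h2⟩
              · exact lt_of_le_of_ne (h2 d (hFD hdF) hdw) (fun h => (hFnotB d hdF) (h ▸ hyB))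
              · exact absurd (h1 d (hFD hdF)) (not_le.2 hdw)
            have hby : b < y := by
              rcases hycase with ⟨h1, h2⟩ | ⟨h1, h2⟩
              · exact lt_trans hbu (lt_of_le_of_lt (huCle w hwC) h1)
              · exact absurd (h1 d (hFD hdF)) (not_le.2 hdw)
            exact hπn B hBmem _ hFmem (fun h => hFB h.symm) ⟨a, b, y, d, hab, hby, hyd, haB, hyB, hbF, hdF⟩
          · exact hπn B hBmem _ hFmem (fun h => hFB h.symm) ⟨a, b, c, d, hab, hbc, hcd, haB, hcB, hbF, hdF⟩
        · rintro ⟨a, b, c, d, hab, hbc, hcd, haF, hcF, hbA, hdA⟩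
          -- a, c ∈ F; b, d ∈ C ∪ B
          rcases Finset.mem_union.1 hbA with hbC | hbB <;> rcases Finset.mem_union.1 hdA with hdC | hdB
          · exact hπn _ hFmem C hCmem hFC ⟨a, b, c, d, hab, hbc, hcd, haF, hcF, hbC, hdC⟩
          · -- b ∈ C, d ∈ B : c > w, y < c
            have hcw : w < c := by
              rcases hFpos c hcF with h' | h'
              · exact absurd (lt_trans (lt_of_lt_of_le h' (huCle b hbC)) hbc) (lt_irrefl c)
              · exact h'
            have hyc : y < c := by
              rcases hycase with ⟨h1, h2⟩ | ⟨h1, h2⟩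
              · exact lt_of_le_of_ne (h2 c (hFD hcF) hcw) (fun h => (hFnotB c hcF) (h ▸ hyB))
              · exact absurd (h1 c (hFD hcF)) (not_le.2 hcw)
            have hay : a < y := by
              rcases hycase with ⟨h1, h2⟩ | ⟨h1, h2⟩
              · exact lt_trans hab (lt_of_le_of_lt (hwCge b hbC) h1)
              · exact absurd (h1 c (hFD hcF)) (not_le.2 hcw)
            exact hπn _ hFmem B hBmem hFB ⟨a, y, c, d, hay, hyc, hcd, haF, hcF, hyB, hdB⟩
          · -- b ∈ B, d ∈ C : c < u, b < u
            have hcu : c < u := by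
              rcases hFpos c hcF with h' | h'
              · exact h'
              · exact absurd (lt_of_le_of_lt (hwCge d hdC) (lt_of_le_of_lt (le_of_lt h') hcd))
                  (lt_irrefl d)
            by_cases hBt : ∃ t ∈ B, c < t
            · obtain ⟨t, htB, hct⟩ := hBt
              exact hπn _ hFmem B hBmem hFB ⟨a, b, c, t, hab, hbc, hct, haF, hcF, hbB, htB⟩
            · push_neg at hBt
              -- all of B ≤ c < u, so case II and y = min D < a
              have hyc : y ≤ c := hBt y hyB
              have hyu : y < u := lt_of_le_of_lt hyc hcu
              have hya : y < a := by
                rcases hycase with ⟨h1, h2⟩ | ⟨h1, h2⟩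
                · exact absurd h1 (not_lt.2 (le_trans (le_of_lt hyu) (huCle w hwC)))
                · exact lt_of_le_of_ne (h2 a (hFD haF)) (fun h => (hFnotB a haF) (h ▸ hyB))
              exact hπn B hBmem _ hFmem (fun h => hFB h.symm) ⟨y, a, b, c, hya, hab, hbc, hyB, hbB, haF, hcF⟩
          · exact hπn _ hFmem B hBmem hFB ⟨a, b, c, d, hab, hbc, hcd, haF, hcF, hbB, hdB⟩
      · -- F outside D
        have hDD' : blk σ f1 ≠ D := fun h => hf1D (h ▸ self_mem_blk σ f1)
        have hD'mem : blk σ f1 ∈ cycleBlocks σ := blk_mem_cycleBlocks σ f1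
        have hFD' : blk π f1 ⊆ blk σ f1 := href f1
        constructor
        · intro hcr
          exact hσn D hDmem _ hD'mem (fun h => hDD' h.symm) (crossPat_mono hAD hFD' hcr)
        · intro hcr
          exact hσn _ hD'mem D hDmem hDD' (crossPat_mono hFD' hAD hcr)
    by_cases hb1A : b1 ∈ C ∪ B <;> by_cases hc1A : c1 ∈ C ∪ B
    · rw [if_pos hb1A] at hne hcross
      rw [if_pos hc1A] at hne hcross
      exact hne rfl
    · rw [if_pos hb1A] at hne hcross
      rw [if_neg hc1A] at hne hcross
      exact (hkey c1 hc1A).1 hcross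
    · rw [if_neg hb1A] at hne hcross
      rw [if_pos hc1A] at hne hcross
      exact (hkey b1 hb1A).2 hcross
    · rw [if_neg hb1A] at hne hcross
      rw [if_neg hc1A] at hne hcross
      have hF1 : blk π b1 ≠ blk π c1 := hne
      exact hπn _ (blk_mem_cycleBlocks π b1) _ (blk_mem_cycleBlocks π c1) hF1 hcross
  · -- refinement preserved
    intro x
    rw [hmg x]
    by_cases hxA : x ∈ C ∪ B
    · rw [if_pos hxA]
      rw [hDblk (hAD hxA)]
      exact hAD
    · rw [if_neg hxA]
      exact href x
end P10
section P11
variable {m : ℕ}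
open Equiv Equiv.Perm Finset

theorem absLe_of_refines {π σ : Equiv.Perm (Fin m)}
    (hπa : Aligned π) (hπn : NoCross (cycleBlocks π)) (hσa : Aligned σ)
    (hσn : NoCross (cycleBlocks σ)) (href : ∀ x, blk π x ⊆ blk σ x) : absLe π σ := by
  suffices h : ∀ k (π : Equiv.Perm (Fin m)), nu π = k → Aligned π → NoCross (cycleBlocks π) →
      (∀ x, blk π x ⊆ blk σ x) → absLe π σ from h _ π rfl hπa hπn href
  clear hπa hπn href π
  intro k
  induction k using Nat.strong_induction_on with
  | _ k ih =>
    intro π hk hπa hπn href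
    by_cases heq : π = σ
    · subst heq; exact absLe_refl π
    · have hnex : ∃ x, blk π x ≠ blk σ x := by
        by_contra hcon
        push_neg at hcon
        exact heq (aligned_unique hπa hσa hcon)
      obtain ⟨π₂, h1, h2, h3, h4, h5⟩ := merge_step hπa hπn hσn href hnex
      exact absLe_trans h5 (ih (nu π₂) (by omega) π₂ rfl h1 h2 h3)

theorem refines_of_absLe {π σ : Equiv.Perm (Fin m)} (h : absLe π σ) :
    ∀ x, blk π x ⊆ blk σ x := by
  suffices hs : ∀ k (π : Equiv.Perm (Fin m)), absLength (π⁻¹ * σ) = k → absLe π σ →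
      ∀ x, blk π x ⊆ blk σ x from hs _ π rfl h
  clear h π
  intro k
  induction k using Nat.strong_induction_on with
  | _ k ih =>
    intro π hk h
    rcases Nat.eq_zero_or_pos k with rfl | hkpos
    · have : π⁻¹ * σ = 1 := eq_one_of_absLength_eq_zero hk
      have hπσ : π = σ := by
        have h2 := congrArg (π * ·) this
        simp only [← mul_assoc, mul_inv_cancel, one_mul, mul_one] at h2
        exact h2.symm
      subst hπσ
      exact fun x => Finset.Subset.refl _
    · obtain ⟨l, hl1, hl2, hl3⟩ := exists_min_factorization (π⁻¹ * σ)
      rw [hk] at hl3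
      have hlne : l ≠ [] := by
        intro hcon
        rw [hcon] at hl3
        simp at hl3
        omega
      obtain ⟨t, l', rfl⟩ := List.exists_cons_of_ne_nil hlne
      obtain ⟨a, b, hab, rfl⟩ := hl1 t List.mem_cons_self
      set π' := π * Equiv.swap a b with hπ'def
      have hprod : π⁻¹ * σ = Equiv.swap a b * l'.prod := by
        rw [← hl2, List.prod_cons]
      have hinv : π'⁻¹ * σ = l'.prod := by
        rw [hπ'def, mul_inv_rev, mul_assoc, hprod, ← mul_assoc,
          Equiv.swap_inv, Equiv.swap_mul_self, one_mul]
      have hY : absLength (π'⁻¹ * σ) ≤ k - 1 := by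
        have : absLength l'.prod ≤ l'.length := by
          apply Nat.sInf_le
          exact ⟨l', rfl, fun s hs => hl1 s (List.mem_cons_of_mem _ hs), rfl⟩
        rw [hinv]
        simp only [List.length_cons] at hl3
        omega
      have hX : absLength π' ≤ absLength π + 1 := by
        calc absLength π' ≤ absLength π + absLength (Equiv.swap a b) := absLength_mul_le _ _
        _ = absLength π + 1 := by rw [absLength_swap hab]
      have htri : absLength σ ≤ absLength π' + absLength (π'⁻¹ * σ) := by
        have : σ = π' * (π'⁻¹ * σ) := by group
        conv_lhs => rw [this]
        exact absLength_mul_le _ _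
      rw [absLe] at h
      have habsle' : absLe π' σ := by rw [absLe]; omega
      have hX' : absLength π' = absLength π + 1 := by omega
      -- nu π' = nu π - 1, so swap merges two cycles of π
      have hnu : nu π = nu π' + 1 := by
        have e1 : absLength π = m - nu π := absLength_eq π
        have e2 : absLength π' = m - nu π' := absLength_eq π'
        have := nu_le π
        have := nu_le π'
        omega
      set u := π a with huu
      set v := π b with hvv
      have huv : u ≠ v := fun hcon => hab (π.injective hcon)
      have hππ' : π' = Equiv.swap u v * π := by
        rw [hπ'def, Equiv.mul_swap_eq_swap_mul]
      have hnc : ¬ π.SameCycle u v := by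
        intro hsc
        have := nu_split huv hsc
        rw [← hππ'] at this
        omega
      intro x
      have hsub1 : blk π x ⊆ blk π' x := by
        rw [hππ']
        exact blk_subset_merge huv hnc x
      have hYlt : absLength (π'⁻¹ * σ) < k := by omega
      exact Finset.Subset.trans hsub1 (ih _ hYlt π' rfl habsle' x)

lemma refines_iff {π σ : Equiv.Perm (Fin m)} :
    Refines (cycleBlocks π) (cycleBlocks σ) ↔ ∀ x, blk π x ⊆ blk σ x := by
  constructor
  · intro h x
    obtain ⟨Cs, hCs, hsub⟩ := h (blk π x) (blk_mem_cycleBlocks π x)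
    have hx : x ∈ Cs := hsub (self_mem_blk π x)
    rw [eq_blk_of_mem hCs hx] at hsub
    exact hsub
  · intro h Bb hBb
    obtain ⟨a, rfl⟩ := hBb
    exact ⟨blk σ a, blk_mem_cycleBlocks σ a, h a⟩

lemma nxt_injOn {S : Finset (Fin m)} {x y : Fin m} (hx : x ∈ S) (hy : y ∈ S)
    (h : nxt S x = nxt S y) : x = y := by
  by_contra hne
  wlog hlt : x < y generalizing x y
  · exact this hy hx h.symm (Ne.symm hne) (lt_of_le_of_ne (not_lt.1 hlt) (Ne.symm hne))
  by_cases hz : ∃ t ∈ S, y < t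
  · obtain ⟨t, htS, hyt⟩ := hz
    have h1 := lt_nxt_of_lt htS hyt
    have h2 : nxt S x ≤ y := nxt_le hy hlt
    rw [h] at h2
    exact absurd (lt_of_lt_of_le h1.1 h2) (lt_irrefl y)
  · push_neg at hz
    have h1 : nxt S y = S.min' ⟨y, hy⟩ := nxt_eq_of_max ⟨y, hy⟩ hz
    have h2 : nxt S x ≤ y := nxt_le hy hlt
    have h3 := lt_nxt_of_lt hy hlt
    rw [h, h1] at h3
    exact absurd h3.1 (not_lt.2 (S.min'_le x hx))

end P11

section P12
open Equiv Equiv.Perm Finset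

lemma exists_perm_of_NCP {m : ℕ} (P : Set (Finset (Fin m))) (hP : IsNCPartition P) :
    ∃ π : Equiv.Perm (Fin m), Aligned π ∧ cycleBlocks π = P := by
  classical
  obtain ⟨hP1, hP2, hP3⟩ := hP
  -- the block of each point
  have hblock : ∀ x : Fin m, ∃ B, (B ∈ P ∧ x ∈ B) := fun x => (hP2 x).exists
  set blo : Fin m → Finset (Fin m) := fun x => (hblock x).choose with hblo
  have hbloP : ∀ x, blo x ∈ P := fun x => (hblock x).choose_spec.1
  have hblomem : ∀ x, x ∈ blo x := fun x => (hblock x).choose_spec.2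
  have hunique : ∀ (x : Fin m) (B : Finset (Fin m)), B ∈ P → x ∈ B → B = blo x := by
    intro x B hB hxB
    exact (hP2 x).unique ⟨hB, hxB⟩ ⟨hbloP x, hblomem x⟩
  have hcongr : ∀ x y : Fin m, y ∈ blo x → blo y = blo x := by
    intro x y hy
    exact (hunique y (blo x) (hbloP x) hy).symm
  set f : Fin m → Fin m := fun x => nxt (blo x) x with hf
  have hinj : Function.Injective f := by
    intro x y hxy
    have h1 : f x ∈ blo x := nxt_mem ⟨x, hblomem x⟩ x
    have h2 : f y ∈ blo y := nxt_mem ⟨y, hblomem y⟩ y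
    have h3 : blo x = blo y := by
      rw [← hxy] at h2
      rw [hunique (f x) (blo x) (hbloP x) h1, hunique (f x) (blo y) (hbloP y) h2]
    have hx' : x ∈ blo y := h3 ▸ hblomem x
    have hxy' : nxt (blo y) x = nxt (blo y) y := by
      have e1 : nxt (blo x) x = nxt (blo y) y := hxy
      rw [h3] at e1
      exact e1
    exact nxt_injOn hx' (hblomem y) hxy'
  have hbij : Function.Bijective f := Finite.injective_iff_bijective.1 hinj
  set π := Equiv.ofBijective f hbij with hπ
  have hπapp : ∀ x, π x = nxt (blo x) x := fun x => rfl
  have key : ∀ x, blk π x = blo x :=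
    blk_eq_of_aligned_blocks hblomem hcongr hπapp
  have hal : Aligned π := by
    intro x
    rw [key x]
    exact hπapp x
  refine ⟨π, hal, ?_⟩
  ext B
  constructor
  · rintro ⟨a, rfl⟩
    show blk π a ∈ P
    rw [key a]
    exact hbloP a
  · intro hB
    obtain ⟨x, hxB⟩ := hP1 B hB
    refine ⟨x, ?_⟩
    show B = blk π x
    rw [key x]
    exact hunique x B hB hxB

theorem stmt2' (n : ℕ) :
    (∀ π : Equiv.Perm (Fin (n + 1)), absLe π (coxeterA n) → IsNCPartition (cycleBlocks π)) ∧
    Set.BijOn cycleBlocks {π | absLe π (coxeterA n)} {P | IsNCPartition P} ∧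
    (∀ π σ : Equiv.Perm (Fin (n + 1)), absLe π (coxeterA n) → absLe σ (coxeterA n) →
      (absLe π σ ↔ Refines (cycleBlocks π) (cycleBlocks σ))) := by
  have hmain : ∀ π : Equiv.Perm (Fin (n + 1)), absLe π (coxeterA n) →
      IsNCPartition (cycleBlocks π) := by
    intro π h
    obtain ⟨hal, hnc⟩ := aligned_of_absLe_coxeter π h
    exact ⟨cycleBlocks_nonempty π, cycleBlocks_partition π, (noCross_iff _).1 hnc⟩
  refine ⟨hmain, ⟨?_, ?_, ?_⟩, ?_⟩
  · -- MapsTo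
    intro π hπ
    exact hmain π hπ
  · -- InjOn
    intro π hπ σ hσ hps
    obtain ⟨hπa, -⟩ := aligned_of_absLe_coxeter π hπ
    obtain ⟨hσa, -⟩ := aligned_of_absLe_coxeter σ hσ
    exact aligned_unique hπa hσa (blk_eq_of_cycleBlocks_eq hps)
  · -- SurjOn
    intro P hP
    obtain ⟨π, hal, hcyc⟩ := exists_perm_of_NCP P hP
    have hnc : NoCross (cycleBlocks π) := by
      rw [hcyc]
      exact (noCross_iff P).2 hP.2.2
    have habs : absLe π (coxeterA n) := by
      apply absLe_of_refines hal hnc (aligned_coxeterA n) (noCross_coxeterA n)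
      intro x
      rw [blk_coxeterA]
      exact Finset.subset_univ _
    exact ⟨π, habs, hcyc⟩
  · -- order isomorphism
    intro π σ hπ hσ
    obtain ⟨hπa, hπn⟩ := aligned_of_absLe_coxeter π hπ
    obtain ⟨hσa, hσn⟩ := aligned_of_absLe_coxeter σ hσ
    constructor
    · intro h
      exact refines_iff.2 (refines_of_absLe h)
    · intro h
      exact absLe_of_refines hπa hπn hσa hσn (refines_iff.1 h)

end P12

/-- Biane's theorem: for `π ≤_T c` in `S_{n+1}` (with `c` the long cycle
`(1 2 ⋯ n+1)`), the cycle partition of `π` is a classical noncrossing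
partition, and `π ↦ {cycles of π}` is an order isomorphism from the poset of
noncrossing partitions of the symmetric group under absolute order onto the
poset of classical noncrossing partitions ordered by refinement. -/
theorem stmt2 (n : ℕ) :
    (∀ π : Equiv.Perm (Fin (n + 1)), absLe π (coxeterA n) → IsNCPartition (cycleBlocks π)) ∧
    Set.BijOn cycleBlocks {π | absLe π (coxeterA n)} {P | IsNCPartition P} ∧
    (∀ π σ : Equiv.Perm (Fin (n + 1)), absLe π (coxeterA n) → absLe σ (coxeterA n) →
      (absLe π σ ↔ Refines (cycleBlocks π) (cycleBlocks σ))) := by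
  exact stmt2' n
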